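/- arXiv:2107.01336 — 5 statements merged into one kernel-verified Lean document; each statement's English description precedes it below -/
import Mathlib

section
/- Let T be a bounded linear operator on H admitting an A-adjoint T♯. Then w_A(T) ≥ ‖T‖_A/2 + | ‖Re_A(T) + Im_A(T)‖_A − ‖Re_A(T) − Im_A(T)‖_A | / (2√2). -/
set_option synthInstance.maxHeartbeats 1000000
set_option maxHeartbeats 1000000

noncomputable section

open Complex ContinuousLinearMap

variable {H : Type*} [NormedAddCommGroup H] [InnerProductSpace ℂ H] [CompleteSpace H]

/-- The `A`-inner product `⟨x, y⟩_A = ⟨A x, y⟩`. -/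
def innA (A : H →L[ℂ] H) (x y : H) : ℂ := @inner ℂ _ _ (A x) y

/-- The `A`-seminorm `‖x‖_A = √⟨A x, x⟩`. -/
def vnormA (A : H →L[ℂ] H) (x : H) : ℝ := Real.sqrt (innA A x x).re

/-- The `A`-operator seminorm `‖T‖_A = sup {‖T x‖_A : ‖x‖_A = 1}`. -/
def opnormA (A T : H →L[ℂ] H) : ℝ :=
  sSup {r : ℝ | ∃ x : H, vnormA A x = 1 ∧ r = vnormA A (T x)}

/-- The `A`-numerical radius `w_A(T) = sup {|⟨T x, x⟩_A| : ‖x‖_A = 1}`. -/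
def wA (A T : H →L[ℂ] H) : ℝ :=
  sSup {r : ℝ | ∃ x : H, vnormA A x = 1 ∧ r = ‖innA A (T x) x‖}

/-- The `A`-numerical range `W_A(T) = {⟨T x, x⟩_A : ‖x‖_A = 1}`. -/
def WA (A T : H →L[ℂ] H) : Set ℂ :=
  {z : ℂ | ∃ x : H, vnormA A x = 1 ∧ z = innA A (T x) x}

/-- `Re_A(T) = (T + T♯)/2`, given an `A`-adjoint `Ts` of `T`. -/
def ReA (T Ts : H →L[ℂ] H) : H →L[ℂ] H := (2 : ℂ)⁻¹ • (T + Ts)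

/-- `Im_A(T) = (T - T♯)/(2i)`, given an `A`-adjoint `Ts` of `T`. -/
def ImA (T Ts : H →L[ℂ] H) : H →L[ℂ] H := (2 * Complex.I)⁻¹ • (T - Ts)

/-- `Ts` is an `A`-adjoint of `T`, i.e. `A ∘ Ts = T* ∘ A`. -/
def IsAAdjoint (A T Ts : H →L[ℂ] H) : Prop :=
  A.comp Ts = (ContinuousLinearMap.adjoint T).comp A

local notation "⟪" x ", " y "⟫" => @inner ℂ _ _ x y

lemma auxSym (A B S : H →L[ℂ] H) (hBadj : ContinuousLinearMap.adjoint B = B)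
    (hAB : ∀ x, B (B x) = A x) (hS : A.comp S = (ContinuousLinearMap.adjoint S).comp A)
    (x y : H) : ⟪B (S x), B y⟫ = ⟪B x, B (S y)⟫ := by
  have hS' : ∀ z, A (S z) = (ContinuousLinearMap.adjoint S) (A z) := fun z =>
    congrFun (congrArg DFunLike.coe hS) z
  calc ⟪B (S x), B y⟫ = ⟪B (S x), ContinuousLinearMap.adjoint B y⟫ := by rw [hBadj]
    _ = ⟪B (B (S x)), y⟫ := by rw [ContinuousLinearMap.adjoint_inner_right]
    _ = ⟪(ContinuousLinearMap.adjoint S) (A x), y⟫ := by rw [hAB, hS']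
    _ = ⟪A x, S y⟫ := by rw [ContinuousLinearMap.adjoint_inner_left]
    _ = ⟪ContinuousLinearMap.adjoint B (B x), S y⟫ := by rw [hBadj, hAB]
    _ = ⟪B x, B (S y)⟫ := by rw [ContinuousLinearMap.adjoint_inner_left]

lemma auxIter (A B S : H →L[ℂ] H) (hBadj : ContinuousLinearMap.adjoint B = B)
    (hAB : ∀ x, B (B x) = A x) (hS : A.comp S = (ContinuousLinearMap.adjoint S).comp A)
    (x : H) : ‖B (S x)‖ ≤ ‖S‖ * ‖B x‖ := by
  set c : ℕ → ℝ := fun n => ‖B ((S ^ n) x)‖ with hc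
  have hc0 : ∀ n, 0 ≤ c n := fun n => norm_nonneg _
  have symn : ∀ n, ∀ u v : H, ⟪B ((S ^ n) u), B v⟫ = ⟪B u, B ((S ^ n) v)⟫ := by
    intro n
    induction n with
    | zero => intro u v; simp
    | succ n ih =>
      intro u v
      have h1 : (S ^ (n + 1)) u = (S ^ n) (S u) := by
        rw [pow_succ]; rfl
      have h2 : S ((S ^ n) v) = (S ^ (n + 1)) v := by
        rw [pow_succ']; rfl
      rw [h1, ih (S u) v, auxSym A B S hBadj hAB hS, h2]
  have hsq : ∀ n, c n ^ 2 ≤ c 0 * c (2 * n) := by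
    intro n
    have h1 : (c n : ℝ) ^ 2 = Complex.re ⟪B ((S ^ n) x), B ((S ^ n) x)⟫ := by
      have := inner_self_eq_norm_sq (𝕜 := ℂ) (B ((S ^ n) x))
      rw [RCLike.re_to_complex] at this
      rw [← this]
    have h2 : ⟪B ((S ^ n) x), B ((S ^ n) x)⟫ = ⟪B x, B ((S ^ (2 * n)) x)⟫ := by
      rw [symn n]
      congr 2
      rw [two_mul, pow_add]; rfl
    have h3 : Complex.re ⟪B x, B ((S ^ (2 * n)) x)⟫ ≤ ‖B x‖ * ‖B ((S ^ (2 * n)) x)‖ := by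
      refine le_trans (Complex.re_le_norm _) ?_
      exact norm_inner_le_norm _ _
    rw [h1, h2]; exact h3
  have hQ : ∀ k, c 1 ^ (2 ^ k) * c 0 ≤ c 0 ^ (2 ^ k) * c (2 ^ k) := by
    intro k
    induction k with
    | zero => simp [mul_comm]
    | succ k ih =>
      by_cases h0 : c 0 = 0
      · have h1 : c 1 ^ 2 ≤ 0 := by have := hsq 1; rw [h0] at this; simpa using this
        have h2 : c 1 = 0 := by nlinarith [hc0 1]
        rw [h2, h0]
        simp only [ne_eq, OfNat.ofNat_ne_zero, not_false_eq_true, zero_pow, zero_mul,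
          mul_zero, pow_succ]
        positivity
      · have hpos : 0 < c 0 := lt_of_le_of_ne (hc0 0) (Ne.symm h0)
        have h1 : (c 1 ^ (2 ^ k) * c 0) ^ 2 ≤ (c 0 ^ (2 ^ k) * c (2 ^ k)) ^ 2 := by
          apply pow_le_pow_left₀ (by positivity) ih
        have h2 := hsq (2 ^ k)
        have h3 : (2 : ℕ) * 2 ^ k = 2 ^ (k + 1) := by ring
        rw [h3] at h2
        apply le_of_mul_le_mul_right _ hpos
        have e1 : c 1 ^ 2 ^ (k + 1) * c 0 * c 0 = (c 1 ^ (2 ^ k) * c 0) ^ 2 := by ring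
        rw [e1]
        calc (c 1 ^ (2 ^ k) * c 0) ^ 2 ≤ (c 0 ^ (2 ^ k) * c (2 ^ k)) ^ 2 := h1
          _ = c 0 ^ (2 ^ (k + 1)) * c (2 ^ k) ^ 2 := by ring
          _ ≤ c 0 ^ (2 ^ (k + 1)) * (c 0 * c (2 ^ (k + 1))) := by
              apply mul_le_mul_of_nonneg_left h2 (by positivity)
          _ = c 0 ^ (2 ^ (k + 1)) * c (2 ^ (k + 1)) * c 0 := by ring
  have hcb : ∀ n, 0 < n → c n ≤ ‖B‖ * ‖S‖ ^ n * ‖x‖ := by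
    intro n hn
    calc c n ≤ ‖B‖ * ‖(S ^ n) x‖ := le_opNorm B _
      _ ≤ ‖B‖ * (‖S ^ n‖ * ‖x‖) := by
          apply mul_le_mul_of_nonneg_left (le_opNorm _ _) (norm_nonneg B)
      _ ≤ ‖B‖ * (‖S‖ ^ n * ‖x‖) := by
          apply mul_le_mul_of_nonneg_left _ (norm_nonneg B)
          apply mul_le_mul_of_nonneg_right (norm_pow_le' S hn) (norm_nonneg x)
      _ = ‖B‖ * ‖S‖ ^ n * ‖x‖ := by ring
  have goal : c 1 ≤ ‖S‖ * c 0 := by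
    by_cases h0 : c 0 = 0
    · have h1 : c 1 ^ 2 ≤ 0 := by have := hsq 1; rw [h0] at this; simpa using this
      have h2 : c 1 = 0 := by nlinarith [hc0 1]
      rw [h2, h0]; simp
    · have hpos : 0 < c 0 := lt_of_le_of_ne (hc0 0) (Ne.symm h0)
      by_cases hS0 : ‖S‖ = 0
      · have : S = 0 := norm_eq_zero.mp hS0
        have h1 : c 1 = 0 := by simp [hc, this]
        rw [h1, hS0]; simp
      · have hSpos : 0 < ‖S‖ := lt_of_le_of_ne (norm_nonneg S) (Ne.symm hS0)
        by_contra hlt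
        push_neg at hlt
        set r := c 1 / (‖S‖ * c 0) with hr
        have hr1 : 1 < r := (one_lt_div (by positivity)).2 hlt
        have hbound : ∀ k, r ^ (2 ^ k) ≤ (‖B‖ * ‖x‖) / c 0 := by
          intro k
          have h1 := hQ k
          have h2 := hcb (2 ^ k) (by positivity)
          have h3 : c 1 ^ (2 ^ k) * c 0 ≤ (‖S‖ * c 0) ^ (2 ^ k) * (‖B‖ * ‖x‖) := by
            calc c 1 ^ (2 ^ k) * c 0 ≤ c 0 ^ (2 ^ k) * c (2 ^ k) := h1
              _ ≤ c 0 ^ (2 ^ k) * (‖B‖ * ‖S‖ ^ (2 ^ k) * ‖x‖) := by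
                  apply mul_le_mul_of_nonneg_left h2 (by positivity)
              _ = (‖S‖ * c 0) ^ (2 ^ k) * (‖B‖ * ‖x‖) := by rw [mul_pow]; ring
          rw [hr, div_pow, div_le_div_iff₀ (by positivity) hpos]
          linarith
        obtain ⟨k, hk⟩ := pow_unbounded_of_one_lt (R := ℝ) ((‖B‖ * ‖x‖) / c 0) hr1
        have hmono : r ^ k ≤ r ^ (2 ^ k) := pow_le_pow_right₀ hr1.le (Nat.lt_two_pow_self (n := k)).le
        linarith [hbound k]
  have e1 : c 1 = ‖B (S x)‖ := by simp [hc]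
  have e0 : c 0 = ‖B x‖ := by simp [hc]
  rw [← e1, ← e0]; exact goal

lemma auxPolar (A B S : H →L[ℂ] H) (hBadj : ContinuousLinearMap.adjoint B = B)
    (hAB : ∀ x, B (B x) = A x) (hS : A.comp S = (ContinuousLinearMap.adjoint S).comp A)
    (c : ℝ) (hc : 0 ≤ c) (h : ∀ z : H, ‖⟪B (S z), B z⟫‖ ≤ c * ‖B z‖ ^ 2)
    (x : H) : ‖B (S x)‖ ≤ c * ‖B x‖ := by
  have key : ∀ y : H, 4 * Complex.re ⟪B (S x), B y⟫ ≤ 2 * c * (‖B x‖ ^ 2 + ‖B y‖ ^ 2) := by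
    intro y
    have expand : ⟪B (S (x + y)), B (x + y)⟫ - ⟪B (S (x - y)), B (x - y)⟫
        = 2 * (⟪B (S x), B y⟫ + ⟪B (S y), B x⟫) := by
      simp only [map_add, map_sub, inner_add_left, inner_add_right, inner_sub_left,
        inner_sub_right]
      ring
    have hconj : ⟪B (S y), B x⟫ = (starRingEnd ℂ) ⟪B (S x), B y⟫ := by
      rw [auxSym A B S hBadj hAB hS y x, ← inner_conj_symm]
    have hre : Complex.re (⟪B (S (x + y)), B (x + y)⟫ - ⟪B (S (x - y)), B (x - y)⟫)
        = 4 * Complex.re ⟪B (S x), B y⟫ := by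
      rw [expand, hconj]
      simp only [Complex.mul_re, Complex.add_re, Complex.conj_re, Complex.conj_im,
        Complex.re_ofNat, Complex.im_ofNat]
      ring
    have h1 : Complex.re (⟪B (S (x + y)), B (x + y)⟫ - ⟪B (S (x - y)), B (x - y)⟫)
        ≤ c * ‖B (x + y)‖ ^ 2 + c * ‖B (x - y)‖ ^ 2 := by
      rw [Complex.sub_re]
      have a1 := Complex.re_le_norm ⟪B (S (x + y)), B (x + y)⟫
      have a2 := Complex.abs_re_le_norm ⟪B (S (x - y)), B (x - y)⟫
      have b1 := h (x + y)
      have b2 := h (x - y)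
      have a3 : |Complex.re ⟪B (S (x - y)), B (x - y)⟫| ≥
          - Complex.re ⟪B (S (x - y)), B (x - y)⟫ := neg_le_abs _
      linarith
    have hpar : ‖B (x + y)‖ ^ 2 + ‖B (x - y)‖ ^ 2 = 2 * (‖B x‖ ^ 2 + ‖B y‖ ^ 2) := by
      have := parallelogram_law_with_norm ℂ (B x) (B y)
      have e1 : B (x + y) = B x + B y := map_add B x y
      have e2 : B (x - y) = B x - B y := map_sub B x y
      rw [e1, e2]
      ring_nf
      ring_nf at this
      linarith
    rw [hre] at h1
    calc 4 * Complex.re ⟪B (S x), B y⟫ ≤ c * ‖B (x + y)‖ ^ 2 + c * ‖B (x - y)‖ ^ 2 := h1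
      _ = c * (‖B (x + y)‖ ^ 2 + ‖B (x - y)‖ ^ 2) := by ring
      _ = 2 * c * (‖B x‖ ^ 2 + ‖B y‖ ^ 2) := by rw [hpar]; ring
  set m := ‖B (S x)‖ with hm
  rcases eq_or_lt_of_le (norm_nonneg (B (S x))) with hm0 | hmpos
  · have hmz : m = 0 := hm.trans hm0.symm
    rw [hmz]; positivity
  · have keyt : ∀ t : ℝ, 0 < t → 4 * t * m ^ 2 ≤ 2 * c * (‖B x‖ ^ 2 + t ^ 2 * m ^ 2) := by
      intro t ht
      have := key ((t : ℂ) • (S x))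
      have e1 : B ((t : ℂ) • (S x)) = (t : ℂ) • (B (S x)) := map_smul B _ _
      rw [e1] at this
      have e2 : Complex.re ⟪B (S x), (t : ℂ) • B (S x)⟫ = t * m ^ 2 := by
        rw [inner_smul_right, Complex.re_ofReal_mul]
        congr 1
        have h5 := inner_self_eq_norm_sq (𝕜 := ℂ) (B (S x))
        rw [RCLike.re_to_complex] at h5
        rw [h5]
      have e3 : ‖(t : ℂ) • B (S x)‖ ^ 2 = t ^ 2 * m ^ 2 := by
        rw [norm_smul, Complex.norm_real, Real.norm_eq_abs, abs_of_pos ht]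
        ring
      rw [e2, e3] at this
      linarith
    rcases eq_or_lt_of_le (norm_nonneg (B x)) with hx0 | hxpos
    · exfalso
      have hcp : (0:ℝ) < c + 1 := by linarith
      have hmm : (0:ℝ) < m ^ 2 := by positivity
      have h4 := keyt (1 / (c + 1)) (by positivity)
      rw [← hx0] at h4
      have h6 : 4 * (1 / (c + 1)) ≤ 2 * c * (1 / (c + 1)) ^ 2 := by
        have h5 : (4 * (1 / (c + 1))) * m ^ 2 ≤ (2 * c * (1 / (c + 1)) ^ 2) * m ^ 2 := by
          nlinarith [h4]
        exact le_of_mul_le_mul_right h5 hmm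
      have h9 := mul_le_mul_of_nonneg_right h6 (sq_nonneg (c + 1))
      have e1 : 4 * (1 / (c + 1)) * (c + 1) ^ 2 = 4 * (c + 1) := by field_simp
      have e2 : 2 * c * (1 / (c + 1)) ^ 2 * (c + 1) ^ 2 = 2 * c := by field_simp
      nlinarith [h9, e1, e2, hc]
    · have h4 := keyt (‖B x‖ / m) (by positivity)
      have hm2 : m ≠ 0 := ne_of_gt hmpos
      have e1 : 4 * (‖B x‖ / m) * m ^ 2 = 4 * (‖B x‖ * m) := by field_simp
      have e2 : 2 * c * (‖B x‖ ^ 2 + (‖B x‖ / m) ^ 2 * m ^ 2)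
          = 2 * c * (‖B x‖ ^ 2 + ‖B x‖ ^ 2) := by field_simp
      have h5 : 4 * (‖B x‖ * m) ≤ 2 * c * (‖B x‖ ^ 2 + ‖B x‖ ^ 2) := by
        nlinarith [h4, e1, e2]
      nlinarith [h5, hxpos, hmpos]

lemma auxAbs1 (t : ℂ) : |t.re + t.im| ≤ Real.sqrt 2 * ‖t‖ := by
  have h2 : (0:ℝ) ≤ Real.sqrt 2 * ‖t‖ := by positivity
  have h1 : (t.re + t.im) ^ 2 ≤ (Real.sqrt 2 * ‖t‖) ^ 2 := by
    rw [mul_pow, Real.sq_sqrt (by norm_num : (0:ℝ) ≤ 2), Complex.sq_norm, Complex.normSq_apply]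
    nlinarith [sq_nonneg (t.re - t.im)]
  calc |t.re + t.im| = Real.sqrt ((t.re + t.im) ^ 2) := (Real.sqrt_sq_eq_abs _).symm
    _ ≤ Real.sqrt ((Real.sqrt 2 * ‖t‖) ^ 2) := Real.sqrt_le_sqrt h1
    _ = Real.sqrt 2 * ‖t‖ := Real.sqrt_sq h2

lemma auxAbs2 (t : ℂ) : |t.re - t.im| ≤ Real.sqrt 2 * ‖t‖ := by
  have h2 : (0:ℝ) ≤ Real.sqrt 2 * ‖t‖ := by positivity
  have h1 : (t.re - t.im) ^ 2 ≤ (Real.sqrt 2 * ‖t‖) ^ 2 := by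
    rw [mul_pow, Real.sq_sqrt (by norm_num : (0:ℝ) ≤ 2), Complex.sq_norm, Complex.normSq_apply]
    nlinarith [sq_nonneg (t.re + t.im)]
  calc |t.re - t.im| = Real.sqrt ((t.re - t.im) ^ 2) := (Real.sqrt_sq_eq_abs _).symm
    _ ≤ Real.sqrt ((Real.sqrt 2 * ‖t‖) ^ 2) := Real.sqrt_le_sqrt h1
    _ = Real.sqrt 2 * ‖t‖ := Real.sqrt_sq h2

theorem stmt10 (A T Ts : H →L[ℂ] H) (hA : A.IsPositive) (hTs : IsAAdjoint A T Ts) :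
    wA A T ≥ opnormA A T / 2 +
      |opnormA A (ReA T Ts + ImA T Ts) - opnormA A (ReA T Ts - ImA T Ts)| / (2 * Real.sqrt 2) := by
  rw [ge_iff_le]
  by_cases hne : ∃ x : H, vnormA A x = 1
  case neg =>
    have hempty : ∀ (S : H →L[ℂ] H),
        {r : ℝ | ∃ x : H, vnormA A x = 1 ∧ r = vnormA A (S x)} = (∅ : Set ℝ) := by
      intro S
      apply Set.eq_empty_iff_forall_notMem.mpr
      rintro r ⟨x, hx, -⟩
      exact hne ⟨x, hx⟩
    have hemptyw : {r : ℝ | ∃ x : H, vnormA A x = 1 ∧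
        r = ‖innA A (T x) x‖} = (∅ : Set ℝ) := by
      apply Set.eq_empty_iff_forall_notMem.mpr
      rintro r ⟨x, hx, -⟩
      exact hne ⟨x, hx⟩
    rw [wA, opnormA, opnormA, opnormA, hempty, hempty, hempty, hemptyw, Real.sSup_empty]
    norm_num
  case pos =>
  obtain ⟨x₀, hx₀⟩ := hne
  have h0 : 0 ≤ A := (A.nonneg_iff_isPositive).2 hA
  set B := CFC.sqrt A with hBdef
  have hB0 : 0 ≤ B := CFC.sqrt_nonneg A
  have hBmul : B * B = A := CFC.sqrt_mul_sqrt_self A h0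
  have hBadj : ContinuousLinearMap.adjoint B = B := by
    rw [← isSelfAdjoint_iff']; exact IsSelfAdjoint.of_nonneg hB0
  have hAB : ∀ x, B (B x) = A x := by
    intro x; rw [← hBmul]; rfl
  have hi : ∀ x y : H, innA A x y = ⟪B x, B y⟫ := by
    intro x y
    rw [innA, ← hAB]
    calc ⟪B (B x), y⟫ = ⟪ContinuousLinearMap.adjoint B (B x), y⟫ := by rw [hBadj]
      _ = ⟪B x, B y⟫ := ContinuousLinearMap.adjoint_inner_left _ _ _
  have hv : ∀ x : H, vnormA A x = ‖B x‖ := by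
    intro x
    rw [vnormA, hi]
    have h5 := inner_self_eq_norm_sq (𝕜 := ℂ) (B x)
    rw [RCLike.re_to_complex] at h5
    rw [h5, Real.sqrt_sq (norm_nonneg _)]
  set R := ReA T Ts with hRdef
  set Im := ImA T Ts with hImdef
  have hsA : star A = A := hA.isSelfAdjoint
  have hmTs : A * Ts = star T * A := by
    rw [ContinuousLinearMap.mul_def, ContinuousLinearMap.mul_def,
      ContinuousLinearMap.star_eq_adjoint]
    exact hTs
  have hmT : A * T = star Ts * A := by
    have h1 := congrArg star hmTs
    rw [star_mul, star_mul, star_star, hsA] at h1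
    exact h1.symm
  have hR : A.comp R = (ContinuousLinearMap.adjoint R).comp A := by
    rw [← ContinuousLinearMap.mul_def, ← ContinuousLinearMap.mul_def,
      ← ContinuousLinearMap.star_eq_adjoint]
    rw [hRdef, ReA, mul_smul_comm, star_smul, smul_mul_assoc, mul_add, star_add, add_mul,
      hmT, hmTs]
    simp only [star_inv₀, star_ofNat]
    module
  have hIm : A.comp Im = (ContinuousLinearMap.adjoint Im).comp A := by
    rw [← ContinuousLinearMap.mul_def, ← ContinuousLinearMap.mul_def,
      ← ContinuousLinearMap.star_eq_adjoint]
    rw [hImdef, ImA, mul_smul_comm, star_smul, smul_mul_assoc, mul_sub, star_sub, sub_mul,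
      hmT, hmTs]
    simp only [star_inv₀, star_mul', star_ofNat, Complex.star_def, Complex.conj_I]
    rw [show ((2:ℂ) * -Complex.I)⁻¹ = -(2 * Complex.I)⁻¹ by ring]
    module
  have hP : A.comp (R + Im) = (ContinuousLinearMap.adjoint (R + Im)).comp A := by
    have h1 : ContinuousLinearMap.adjoint (R + Im)
        = ContinuousLinearMap.adjoint R + ContinuousLinearMap.adjoint Im := by
      rw [← ContinuousLinearMap.star_eq_adjoint, ← ContinuousLinearMap.star_eq_adjoint,
        ← ContinuousLinearMap.star_eq_adjoint, star_add]
    rw [h1, ContinuousLinearMap.comp_add, ContinuousLinearMap.add_comp, hR, hIm]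
  have hQ : A.comp (R - Im) = (ContinuousLinearMap.adjoint (R - Im)).comp A := by
    have h1 : ContinuousLinearMap.adjoint (R - Im)
        = ContinuousLinearMap.adjoint R - ContinuousLinearMap.adjoint Im := by
      rw [← ContinuousLinearMap.star_eq_adjoint, ← ContinuousLinearMap.star_eq_adjoint,
        ← ContinuousLinearMap.star_eq_adjoint, star_sub]
    rw [h1, ContinuousLinearMap.comp_sub, ContinuousLinearMap.sub_comp, hR, hIm]
  have hpt : ∀ x : H, T x = R x + Complex.I • (Im x) := by
    intro x
    rw [hRdef, hImdef]
    simp only [ReA, ImA, ContinuousLinearMap.smul_apply, ContinuousLinearMap.add_apply,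
      ContinuousLinearMap.sub_apply, ContinuousLinearMap.coe_smul']
    match_scalars <;> (field_simp; try ring)
  have hpt2 : ∀ x : H, T x = (2:ℂ)⁻¹ • ((1 + Complex.I) • ((R + Im) x)
      + (1 - Complex.I) • ((R - Im) x)) := by
    intro x
    rw [hRdef, hImdef]
    simp only [ReA, ImA, ContinuousLinearMap.add_apply, ContinuousLinearMap.sub_apply,
      ContinuousLinearMap.smul_apply, ContinuousLinearMap.coe_smul']
    match_scalars <;> (field_simp; try ring)
  have hRpt : ∀ x, ‖B (R x)‖ ≤ ‖R‖ * ‖B x‖ := auxIter A B R hBadj hAB hR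
  have hImpt : ∀ x, ‖B (Im x)‖ ≤ ‖Im‖ * ‖B x‖ := auxIter A B Im hBadj hAB hIm
  have hTpt : ∀ x, ‖B (T x)‖ ≤ (‖R‖ + ‖Im‖) * ‖B x‖ := by
    intro x
    calc ‖B (T x)‖ = ‖B (R x) + Complex.I • B (Im x)‖ := by rw [hpt x, map_add, map_smul]
      _ ≤ ‖B (R x)‖ + ‖Complex.I • B (Im x)‖ := norm_add_le _ _
      _ = ‖B (R x)‖ + ‖B (Im x)‖ := by rw [norm_smul, Complex.norm_I, one_mul]
      _ ≤ ‖R‖ * ‖B x‖ + ‖Im‖ * ‖B x‖ := add_le_add (hRpt x) (hImpt x)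
      _ = (‖R‖ + ‖Im‖) * ‖B x‖ := by ring
  set W := {r : ℝ | ∃ x : H, vnormA A x = 1 ∧ r = ‖innA A (T x) x‖} with hWdef
  have hwA : wA A T = sSup W := rfl
  have hWbdd : BddAbove W := by
    refine ⟨‖R‖ + ‖Im‖, ?_⟩
    rintro r ⟨x, hx1, rfl⟩
    rw [hi]
    rw [hv] at hx1
    have h1 : ‖⟪B (T x), B x⟫‖ ≤ ‖B (T x)‖ * ‖B x‖ := by
      exact norm_inner_le_norm _ _
    calc ‖⟪B (T x), B x⟫‖ ≤ ‖B (T x)‖ * ‖B x‖ := h1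
      _ = ‖B (T x)‖ := by rw [hx1, mul_one]
      _ ≤ (‖R‖ + ‖Im‖) * ‖B x‖ := hTpt x
      _ = ‖R‖ + ‖Im‖ := by rw [hx1, mul_one]
  have hw0 : 0 ≤ wA A T := by
    have hmem : ‖innA A (T x₀) x₀‖ ∈ W := ⟨x₀, hx₀, rfl⟩
    exact le_trans (norm_nonneg _) (le_csSup hWbdd hmem)
  have hBsmul : ∀ (x : H) (c : ℝ) (S : H →L[ℂ] H),
      B (S (((c : ℝ) : ℂ) • x)) = ((c : ℝ) : ℂ) • B (S x) := by
    intro x c S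
    rw [map_smul, map_smul]
  have hunit : ∀ x : H, ‖B x‖ ≠ 0 → vnormA A (((‖B x‖⁻¹ : ℝ) : ℂ) • x) = 1 := by
    intro x hx
    rw [hv, map_smul, norm_smul, Complex.norm_real, Real.norm_eq_abs,
      _root_.abs_of_nonneg (by positivity), inv_mul_cancel₀ hx]
  have hnum : ∀ x : H, ‖innA A (T x) x‖ ≤ wA A T * ‖B x‖ ^ 2 := by
    intro x
    by_cases hx : ‖B x‖ = 0
    · rw [hi]
      rw [norm_eq_zero] at hx
      rw [hx, inner_zero_right]
      simp
    · have hxpos : 0 < ‖B x‖ := lt_of_le_of_ne (norm_nonneg _) (Ne.symm hx)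
      set u := ((‖B x‖⁻¹ : ℝ) : ℂ) • x with hu
      have hu1 : vnormA A u = 1 := hunit x hx
      have hmem : ‖innA A (T u) u‖ ∈ W := ⟨u, hu1, rfl⟩
      have hle := le_csSup hWbdd hmem
      have hTu : innA A (T u) u = ((‖B x‖⁻¹ ^ 2 : ℝ) : ℂ) * innA A (T x) x := by
        rw [hi, hi, hu, map_smul, map_smul, map_smul, inner_smul_left, inner_smul_right,
          Complex.conj_ofReal]
        push_cast
        ring
      have h7 : ‖innA A (T u) u‖ = ‖B x‖⁻¹ ^ 2 * ‖innA A (T x) x‖ := by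
        rw [hTu, norm_mul, Complex.norm_real, Real.norm_eq_abs, _root_.abs_of_nonneg (by positivity)]
      rw [h7] at hle
      calc ‖innA A (T x) x‖
          = ‖B x‖ ^ 2 * (‖B x‖⁻¹ ^ 2 * ‖innA A (T x) x‖) := by
            field_simp
        _ ≤ ‖B x‖ ^ 2 * sSup W := mul_le_mul_of_nonneg_left hle (by positivity)
        _ = wA A T * ‖B x‖ ^ 2 := by rw [hwA]; ring
  have hreal : ∀ (S : H →L[ℂ] H), A.comp S = (ContinuousLinearMap.adjoint S).comp A →
      ∀ x : H, (⟪B (S x), B x⟫).im = 0 := by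
    intro S hS x
    have h1 : ⟪B (S x), B x⟫ = ⟪B x, B (S x)⟫ := auxSym A B S hBadj hAB hS x x
    have h2 : (starRingEnd ℂ) ⟪B (S x), B x⟫ = ⟪B (S x), B x⟫ := by
      rw [inner_conj_symm, ← h1]
    exact Complex.conj_eq_iff_im.mp h2
  have hrealR := hreal R hR
  have hrealIm := hreal Im hIm
  have hdecomp : ∀ x : H, (⟪B (R x), B x⟫ + ⟪B (Im x), B x⟫).re
        = (innA A (T x) x).re - (innA A (T x) x).im
      ∧ (⟪B (R x), B x⟫ - ⟪B (Im x), B x⟫).re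
        = (innA A (T x) x).re + (innA A (T x) x).im := by
    intro x
    have hz : innA A (T x) x = ⟪B (R x), B x⟫ - Complex.I * ⟪B (Im x), B x⟫ := by
      rw [hi, hpt x, map_add, map_smul, inner_add_left, inner_smul_left, Complex.conj_I]
      ring
    rw [hz]
    constructor <;>
      (simp [Complex.sub_re, Complex.sub_im, Complex.add_re, Complex.mul_re, Complex.mul_im,
        Complex.I_re, Complex.I_im, hrealR x, hrealIm x]; try ring)
  have hPinn : ∀ x : H, ‖innA A ((R + Im) x) x‖
      ≤ (Real.sqrt 2 * wA A T) * ‖B x‖ ^ 2 := by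
    intro x
    have h1 : innA A ((R + Im) x) x = ⟪B (R x), B x⟫ + ⟪B (Im x), B x⟫ := by
      rw [hi, ContinuousLinearMap.add_apply, map_add, inner_add_left]
    have him : (⟪B (R x), B x⟫ + ⟪B (Im x), B x⟫).im = 0 := by
      rw [Complex.add_im, hrealR x, hrealIm x, add_zero]
    have habs : ‖⟪B (R x), B x⟫ + ⟪B (Im x), B x⟫‖
        = |(⟪B (R x), B x⟫ + ⟪B (Im x), B x⟫).re| := (Complex.abs_re_eq_norm.mpr him).symm
    rw [h1, habs, (hdecomp x).1]
    calc |(innA A (T x) x).re - (innA A (T x) x).im|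
        ≤ Real.sqrt 2 * ‖innA A (T x) x‖ := auxAbs2 _
      _ ≤ Real.sqrt 2 * (wA A T * ‖B x‖ ^ 2) :=
          mul_le_mul_of_nonneg_left (hnum x) (Real.sqrt_nonneg 2)
      _ = (Real.sqrt 2 * wA A T) * ‖B x‖ ^ 2 := by ring
  have hQinn : ∀ x : H, ‖innA A ((R - Im) x) x‖
      ≤ (Real.sqrt 2 * wA A T) * ‖B x‖ ^ 2 := by
    intro x
    have h1 : innA A ((R - Im) x) x = ⟪B (R x), B x⟫ - ⟪B (Im x), B x⟫ := by
      rw [hi, ContinuousLinearMap.sub_apply, map_sub, inner_sub_left]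
    have him : (⟪B (R x), B x⟫ - ⟪B (Im x), B x⟫).im = 0 := by
      rw [Complex.sub_im, hrealR x, hrealIm x, sub_zero]
    have habs : ‖⟪B (R x), B x⟫ - ⟪B (Im x), B x⟫‖
        = |(⟪B (R x), B x⟫ - ⟪B (Im x), B x⟫).re| := (Complex.abs_re_eq_norm.mpr him).symm
    rw [h1, habs, (hdecomp x).2]
    calc |(innA A (T x) x).re + (innA A (T x) x).im|
        ≤ Real.sqrt 2 * ‖innA A (T x) x‖ := auxAbs1 _
      _ ≤ Real.sqrt 2 * (wA A T * ‖B x‖ ^ 2) :=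
          mul_le_mul_of_nonneg_left (hnum x) (Real.sqrt_nonneg 2)
      _ = (Real.sqrt 2 * wA A T) * ‖B x‖ ^ 2 := by ring
  have hPpolar := auxPolar A B (R + Im) hBadj hAB hP (Real.sqrt 2 * wA A T)
    (by positivity) (fun z => by rw [← hi]; exact hPinn z)
  have hQpolar := auxPolar A B (R - Im) hBadj hAB hQ (Real.sqrt 2 * wA A T)
    (by positivity) (fun z => by rw [← hi]; exact hQinn z)
  have hPopn : opnormA A (R + Im) ≤ Real.sqrt 2 * wA A T := by
    rw [opnormA]
    apply csSup_le
    · exact ⟨vnormA A ((R + Im) x₀), ⟨x₀, hx₀, rfl⟩⟩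
    rintro r ⟨x, hx1, rfl⟩
    rw [hv] at hx1 ⊢
    calc ‖B ((R + Im) x)‖ ≤ Real.sqrt 2 * wA A T * ‖B x‖ := hPpolar x
      _ = Real.sqrt 2 * wA A T := by rw [hx1, mul_one]
  have hQopn : opnormA A (R - Im) ≤ Real.sqrt 2 * wA A T := by
    rw [opnormA]
    apply csSup_le
    · exact ⟨vnormA A ((R - Im) x₀), ⟨x₀, hx₀, rfl⟩⟩
    rintro r ⟨x, hx1, rfl⟩
    rw [hv] at hx1 ⊢
    calc ‖B ((R - Im) x)‖ ≤ Real.sqrt 2 * wA A T * ‖B x‖ := hQpolar x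
      _ = Real.sqrt 2 * wA A T := by rw [hx1, mul_one]
  have hbddgen : ∀ (S : H →L[ℂ] H), A.comp S = (ContinuousLinearMap.adjoint S).comp A →
      BddAbove {r : ℝ | ∃ x : H, vnormA A x = 1 ∧ r = vnormA A (S x)} := by
    intro S hS
    refine ⟨‖S‖, ?_⟩
    rintro r ⟨x, hx1, rfl⟩
    rw [hv] at hx1 ⊢
    calc ‖B (S x)‖ ≤ ‖S‖ * ‖B x‖ := auxIter A B S hBadj hAB hS x
      _ = ‖S‖ := by rw [hx1, mul_one]
  have hpointgen : ∀ (S : H →L[ℂ] H), A.comp S = (ContinuousLinearMap.adjoint S).comp A →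
      ∀ x : H, ‖B (S x)‖ ≤ opnormA A S * ‖B x‖ := by
    intro S hS x
    by_cases hx : ‖B x‖ = 0
    · have h1 := auxIter A B S hBadj hAB hS x
      rw [hx, mul_zero] at h1
      rw [hx, mul_zero]
      exact h1
    · have hxpos : 0 < ‖B x‖ := lt_of_le_of_ne (norm_nonneg _) (Ne.symm hx)
      set u := ((‖B x‖⁻¹ : ℝ) : ℂ) • x with hu
      have hu1 : vnormA A u = 1 := hunit x hx
      have hmem : vnormA A (S u) ∈ {r : ℝ | ∃ x : H, vnormA A x = 1 ∧ r = vnormA A (S x)} :=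
        ⟨u, hu1, rfl⟩
      have hle := le_csSup (hbddgen S hS) hmem
      have h2 : vnormA A (S u) = ‖B x‖⁻¹ * ‖B (S x)‖ := by
        rw [hv, hu, map_smul, map_smul, norm_smul, Complex.norm_real, Real.norm_eq_abs,
          _root_.abs_of_nonneg (by positivity)]
      rw [h2] at hle
      calc ‖B (S x)‖ = ‖B x‖ * (‖B x‖⁻¹ * ‖B (S x)‖) := by field_simp
        _ ≤ ‖B x‖ * opnormA A S := mul_le_mul_of_nonneg_left hle (norm_nonneg _)
        _ = opnormA A S * ‖B x‖ := mul_comm _ _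
  have hI1 : ‖(1 + Complex.I : ℂ)‖ = Real.sqrt 2 := by
    rw [Complex.norm_def]
    norm_num [Complex.normSq_apply]
  have hI2 : ‖(1 - Complex.I : ℂ)‖ = Real.sqrt 2 := by
    rw [Complex.norm_def]
    norm_num [Complex.normSq_apply]
  have hTopn : opnormA A T
      ≤ (Real.sqrt 2 / 2) * (opnormA A (R + Im) + opnormA A (R - Im)) := by
    rw [opnormA]
    apply csSup_le
    · exact ⟨vnormA A (T x₀), ⟨x₀, hx₀, rfl⟩⟩
    rintro r ⟨x, hx1, rfl⟩
    rw [hv] at hx1 ⊢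
    have e : B (T x) = (2:ℂ)⁻¹ • ((1 + Complex.I) • B ((R + Im) x)
        + (1 - Complex.I) • B ((R - Im) x)) := by
      rw [hpt2 x, map_smul, map_add, map_smul, map_smul]
    rw [e, norm_smul]
    have h1 : ‖(1 + Complex.I) • B ((R + Im) x) + (1 - Complex.I) • B ((R - Im) x)‖
        ≤ Real.sqrt 2 * opnormA A (R + Im) + Real.sqrt 2 * opnormA A (R - Im) := by
      refine le_trans (norm_add_le _ _) ?_
      rw [norm_smul, norm_smul, hI1, hI2]
      have hp := hpointgen (R + Im) hP x
      have hq := hpointgen (R - Im) hQ x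
      rw [hx1, mul_one] at hp hq
      exact add_le_add (mul_le_mul_of_nonneg_left hp (Real.sqrt_nonneg 2))
        (mul_le_mul_of_nonneg_left hq (Real.sqrt_nonneg 2))
    have h2 : ‖((2:ℂ)⁻¹ : ℂ)‖ = 1/2 := by norm_num
    rw [h2]
    have h3 : (0:ℝ) ≤ 1/2 := by norm_num
    calc (1/2 : ℝ) * ‖(1 + Complex.I) • B ((R + Im) x) + (1 - Complex.I) • B ((R - Im) x)‖
        ≤ (1/2) * (Real.sqrt 2 * opnormA A (R + Im) + Real.sqrt 2 * opnormA A (R - Im)) :=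
          mul_le_mul_of_nonneg_left h1 h3
      _ = (Real.sqrt 2 / 2) * (opnormA A (R + Im) + opnormA A (R - Im)) := by ring
  have hs2 : Real.sqrt 2 ^ 2 = 2 := Real.sq_sqrt (by norm_num)
  have hspos : 0 < Real.sqrt 2 := by positivity
  set a := opnormA A (R + Im) with hadef
  set b := opnormA A (R - Im) with hbdef
  have hdiv : |a - b| / (2 * Real.sqrt 2) = |a - b| * Real.sqrt 2 / 4 := by
    rw [div_eq_div_iff (by positivity) (by norm_num)]
    linear_combination (-2 * |a - b|) * hs2
  rw [hdiv]
  rcases abs_cases (a - b) with ⟨he, _⟩ | ⟨he, _⟩ <;> rw [he] <;>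
    nlinarith [hPopn, hQopn, hTopn, hs2, hspos, hw0,
      mul_le_mul_of_nonneg_left hPopn hspos.le, mul_le_mul_of_nonneg_left hQopn hspos.le]
end
end

section
/- Let T be a bounded linear operator on H admitting an A-adjoint T♯. Then w_A(T) ≥ (1/√2)‖Re_A(T) + Im_A(T)‖_A and w_A(T) ≥ (1/√2)‖Re_A(T) − Im_A(T)‖_A. -/
noncomputable section

open Complex ContinuousLinearMap

variable {H : Type*} [NormedAddCommGroup H] [InnerProductSpace ℂ H] [CompleteSpace H]

set_option linter.unusedSectionVars false
set_option maxHeartbeats 1000000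

section AuxLemmas

variable (A : H →L[ℂ] H)

lemma innA_re_nonneg (hA : A.IsPositive) (x : H) : 0 ≤ (innA A x x).re := by
  have := hA.2 x
  simpa [ContinuousLinearMap.reApplyInnerSelf, innA] using this

lemma vnormA_nonneg (x : H) : 0 ≤ vnormA A x := Real.sqrt_nonneg _

lemma vnormA_sq (hA : A.IsPositive) (x : H) : vnormA A x ^ 2 = (innA A x x).re :=
  Real.sq_sqrt (innA_re_nonneg A hA x)

lemma innA_symm (hA : A.IsPositive) (x y : H) :
    innA A y x = starRingEnd ℂ (innA A x y) := by
  have hAx : A y = (ContinuousLinearMap.adjoint A) y := by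
    rw [hA.isSelfAdjoint.adjoint_eq]
  rw [innA, innA, hAx, ContinuousLinearMap.adjoint_inner_left, ← inner_conj_symm]

lemma semiCS_aux (hA : A.IsPositive) (x y : H) (hre : 0 ≤ (innA A x y).re)
    (him : (innA A x y).im = 0) :
    (innA A x y).re ≤ vnormA A x * vnormA A y := by
  set p := (innA A x x).re with hp
  set q := (innA A y y).re with hq
  set b := (innA A x y).re with hb
  have hqn : 0 ≤ q := innA_re_nonneg A hA y
  have hpn : 0 ≤ p := innA_re_nonneg A hA x
  have hsymm : innA A y x = starRingEnd ℂ (innA A x y) := innA_symm A hA x y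
  have key : ∀ t : ℝ, 0 ≤ q * (t * t) + (-(2 * b)) * t + p := by
    intro t
    have h0 : 0 ≤ (innA A (x - (t : ℂ) • y) (x - (t : ℂ) • y)).re :=
      innA_re_nonneg A hA _
    have hexp : innA A (x - (t : ℂ) • y) (x - (t : ℂ) • y)
        = innA A x x - (t : ℂ) * innA A x y - (t : ℂ) * innA A y x
          + (t : ℂ) * (t : ℂ) * innA A y y := by
      simp only [innA, map_sub, map_smul, inner_sub_left, inner_sub_right,
        inner_smul_left, inner_smul_right, Complex.conj_ofReal]
      ring
    rw [hexp, hsymm] at h0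
    simp only [Complex.sub_re, Complex.add_re, Complex.mul_re, Complex.mul_im,
      Complex.ofReal_re, Complex.ofReal_im, Complex.conj_re, Complex.conj_im, him] at h0
    rw [← hb, ← hp, ← hq] at h0
    nlinarith [h0]
  have hd := discrim_le_zero key
  have hbb : b * b ≤ p * q := by
    simp only [discrim] at hd; nlinarith
  calc b = Real.sqrt (b * b) := (Real.sqrt_mul_self hre).symm
    _ ≤ Real.sqrt (p * q) := Real.sqrt_le_sqrt hbb
    _ = vnormA A x * vnormA A y := by
        rw [Real.sqrt_mul hpn]; rfl

lemma innA_smul_smul (a c : ℂ) (x y : H) :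
    innA A (a • x) (c • y) = starRingEnd ℂ a * c * innA A x y := by
  simp only [innA, map_smul, inner_smul_left, inner_smul_right]; ring

lemma vnormA_smul (a : ℂ) (y : H) :
    vnormA A (a • y) = ‖a‖ * vnormA A y := by
  unfold vnormA
  have : innA A (a • y) (a • y) = (Complex.normSq a : ℂ) * innA A y y := by
    rw [innA_smul_smul]
    rw [← Complex.normSq_eq_conj_mul_self]
  rw [this]
  simp only [Complex.re_ofReal_mul]
  rw [Real.sqrt_mul (Complex.normSq_nonneg a), ← Complex.norm_def]

lemma semiCS (hA : A.IsPositive) (x y : H) :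
    ‖innA A x y‖ ≤ vnormA A x * vnormA A y := by
  set z := innA A x y with hz
  by_cases h0 : z = 0
  · rw [h0]; simp
    exact mul_nonneg (vnormA_nonneg A x) (vnormA_nonneg A y)
  · set c : ℂ := starRingEnd ℂ z / ((‖z‖ : ℝ) : ℂ) with hc
    have habs : ‖z‖ ≠ 0 := by simpa using h0
    have hcz : innA A x (c • y) = ((‖z‖ : ℝ) : ℂ) := by
      rw [show innA A x (c • y) = c * innA A x y by
        simp [innA, inner_smul_right], hc, ← hz,
        div_mul_eq_mul_div, mul_comm, Complex.mul_conj, Complex.normSq_eq_norm_sq]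
      push_cast
      rw [sq, mul_div_assoc, div_self (by exact_mod_cast habs), mul_one]
    have := semiCS_aux A hA x (c • y) (by rw [hcz]; simp [norm_nonneg])
      (by rw [hcz]; simp)
    rw [hcz] at this
    simp only [Complex.ofReal_re] at this
    have hvc : vnormA A (c • y) = vnormA A y := by
      rw [vnormA_smul]
      have : ‖c‖ = 1 := by
        rw [hc, norm_div, Complex.norm_conj, Complex.norm_real,
          norm_norm, div_self habs]
      rw [this, one_mul]
    rw [hvc] at this
    exact this


lemma move1 {T Ts : H →L[ℂ] H} (hTs : IsAAdjoint A T Ts) (x y : H) :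
    innA A (Ts x) y = innA A x (T y) := by
  have h : A (Ts x) = (ContinuousLinearMap.adjoint T) (A x) :=
    congrFun (congrArg DFunLike.coe hTs) x
  rw [innA, innA, h, ContinuousLinearMap.adjoint_inner_left]

lemma move2 (hA : A.IsPositive) {T Ts : H →L[ℂ] H} (hTs : IsAAdjoint A T Ts) (x y : H) :
    innA A (T x) y = innA A x (Ts y) := by
  rw [innA_symm A hA y (T x), ← move1 A hTs y x, innA_symm A hA x (Ts y)]
  simp

-- moving powers of R across
lemma move_pow (R : H →L[ℂ] H) (hR : ∀ x y : H, innA A (R x) y = innA A x (R y))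
    (k : ℕ) : ∀ x y : H, innA A ((R ^ k) x) y = innA A x ((R ^ k) y) := by
  induction k with
  | zero => simp
  | succ n ih =>
      intro x y
      have h1 : (R ^ (n + 1)) x = (R ^ n) (R x) := by
        rw [pow_succ]; rfl
      have h2 : (R ^ (n + 1)) y = R ((R ^ n) y) := by
        rw [pow_succ']; rfl
      rw [h1, ih (R x) y, hR, h2]

lemma vnorm_le_of_sq_le {a b : ℝ} (hb : 0 ≤ b) (h : a ^ 2 ≤ b) (ha : 0 ≤ a) :
    a ≤ Real.sqrt b := by
  nlinarith [Real.sq_sqrt hb, Real.sqrt_nonneg b, sq_nonneg (a - Real.sqrt b)]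

/-- Key boundedness: if `R` is `A`-selfadjoint then `‖Rx‖_A ≤ ‖R‖` for `A`-unit `x`. -/
lemma bounded_aux (hA : A.IsPositive) (R : H →L[ℂ] H)
    (hR : ∀ x y : H, innA A (R x) y = innA A x (R y)) (x : H) (hx : vnormA A x = 1) :
    vnormA A (R x) ≤ ‖R‖ := by
  set f : ℕ → ℝ := fun n => vnormA A ((R ^ (2 ^ n)) x) with hf
  have hfnn : ∀ n, 0 ≤ f n := fun n => vnormA_nonneg A _
  have hfsq : ∀ n, f n ^ 2 ≤ f (n + 1) := by
    intro n
    have h1 : f n ^ 2 = (innA A x ((R ^ (2 ^ n + 2 ^ n)) x)).re := by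
      rw [hf]
      simp only []
      rw [vnormA_sq A hA, move_pow A R hR, pow_add]
      rfl
    have h2 : (innA A x ((R ^ (2 ^ n + 2 ^ n)) x)).re
        ≤ ‖innA A x ((R ^ (2 ^ n + 2 ^ n)) x)‖ := Complex.re_le_norm _
    have h3 : ‖innA A x ((R ^ (2 ^ n + 2 ^ n)) x)‖
        ≤ vnormA A x * vnormA A ((R ^ (2 ^ n + 2 ^ n)) x) := semiCS A hA _ _
    have h4 : (2 : ℕ) ^ n + 2 ^ n = 2 ^ (n + 1) := by ring
    calc f n ^ 2 = (innA A x ((R ^ (2 ^ n + 2 ^ n)) x)).re := h1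
      _ ≤ ‖innA A x ((R ^ (2 ^ n + 2 ^ n)) x)‖ := h2
      _ ≤ vnormA A x * vnormA A ((R ^ (2 ^ n + 2 ^ n)) x) := h3
      _ = f (n + 1) := by
          rw [hx, one_mul, hf]
          simp only []
          rw [h4]
  have hC : ∀ n, f n ≤ Real.sqrt ‖A‖ * (‖R‖ ^ (2 ^ n) * ‖x‖) := by
    intro n
    set u := (R ^ (2 ^ n)) x with hu
    have h1 : (innA A u u).re ≤ ‖A‖ * ‖u‖ ^ 2 := by
      have := (Complex.re_le_norm (innA A u u)).trans
        ((norm_inner_le_norm (𝕜 := ℂ) (A u) u).trans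
          (mul_le_mul_of_nonneg_right (A.le_opNorm u) (norm_nonneg u)))
      calc (innA A u u).re ≤ ‖A‖ * ‖u‖ * ‖u‖ := by
            simpa [innA] using this
        _ = ‖A‖ * ‖u‖ ^ 2 := by ring
    have h2 : vnormA A u ≤ Real.sqrt (‖A‖ * ‖u‖ ^ 2) :=
      Real.sqrt_le_sqrt h1
    have h3 : Real.sqrt (‖A‖ * ‖u‖ ^ 2) = Real.sqrt ‖A‖ * ‖u‖ := by
      rw [Real.sqrt_mul (norm_nonneg A), Real.sqrt_sq (norm_nonneg u)]
    have h4 : ‖u‖ ≤ ‖R‖ ^ (2 ^ n) * ‖x‖ := by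
      calc ‖u‖ ≤ ‖R ^ (2 ^ n)‖ * ‖x‖ := (R ^ (2 ^ n)).le_opNorm x
        _ ≤ ‖R‖ ^ (2 ^ n) * ‖x‖ :=
            mul_le_mul_of_nonneg_right (norm_pow_le' R (pow_pos two_pos n)) (norm_nonneg x)
    calc f n ≤ Real.sqrt ‖A‖ * ‖u‖ := h3 ▸ h2
      _ ≤ Real.sqrt ‖A‖ * (‖R‖ ^ (2 ^ n) * ‖x‖) :=
          mul_le_mul_of_nonneg_left h4 (Real.sqrt_nonneg _)
  have hgrow : ∀ n, f 0 ^ (2 ^ n) ≤ f n := by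
    intro n
    induction n with
    | zero => simp
    | succ n ih =>
        calc f 0 ^ (2 ^ (n + 1)) = (f 0 ^ (2 ^ n)) ^ 2 := by
              rw [← pow_mul, pow_succ]
          _ ≤ f n ^ 2 := by
              apply pow_le_pow_left₀ (pow_nonneg (hfnn 0) _) ih
          _ ≤ f (n + 1) := hfsq n
  -- conclude f 0 ≤ ‖R‖
  by_contra hcon
  push_neg at hcon
  have hcon' : ‖R‖ < f 0 := by
    have : f 0 = vnormA A ((R ^ (2 ^ 0)) x) := rfl
    rw [this, pow_zero, pow_one]
    exact hcon
  have hR0 : 0 ≤ ‖R‖ := norm_nonneg R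
  rcases eq_or_lt_of_le hR0 with hR0' | hR0'
  · have h1 := (hgrow 0).trans (hC 0)
    rw [← hR0'] at h1 hcon'
    simp at h1
    linarith
  · set r := f 0 / ‖R‖ with hr
    have hr1 : 1 < r := (one_lt_div hR0').mpr hcon'
    set C := Real.sqrt ‖A‖ * ‖x‖ with hCdef
    obtain ⟨n, hn⟩ := pow_unbounded_of_one_lt C hr1
    have hle : r ^ (2 ^ n) ≤ C := by
      have h1 : f 0 ^ (2 ^ n) ≤ C * ‖R‖ ^ (2 ^ n) := by
        have := (hgrow n).trans (hC n)
        calc f 0 ^ (2 ^ n) ≤ Real.sqrt ‖A‖ * (‖R‖ ^ (2 ^ n) * ‖x‖) := this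
          _ = C * ‖R‖ ^ (2 ^ n) := by rw [hCdef]; ring
      rw [hr, div_pow, div_le_iff₀ (pow_pos hR0' _)]
      linarith
    have hmono : r ^ n ≤ r ^ (2 ^ n) :=
      pow_le_pow_right₀ hr1.le (Nat.lt_two_pow_self).le
    linarith



lemma key_ineq (hA : A.IsPositive) (T Ts S : H →L[ℂ] H) (hTs : IsAAdjoint A T Ts)
    (hSmove : ∀ x y : H, innA A (S x) y = innA A x (S y))
    (hSval : ∀ x : H, vnormA A x = 1 →
      ‖innA A (S x) x‖ ≤ Real.sqrt 2 * ‖innA A (T x) x‖) :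
    (1 / Real.sqrt 2) * opnormA A S ≤ wA A T := by
  set R := Ts.comp T with hRdef
  have hRmove : ∀ x y : H, innA A (R x) y = innA A x (R y) := by
    intro x y
    show innA A (Ts (T x)) y = innA A x (Ts (T y))
    rw [move1 A hTs (T x) y, move2 A hA hTs x (T y)]
  have hTbound : ∀ x : H, vnormA A x = 1 → vnormA A (T x) ≤ Real.sqrt ‖R‖ := by
    intro x hx
    have e1 : vnormA A (T x) ^ 2 = (innA A x (R x)).re := by
      rw [vnormA_sq A hA]
      show (innA A (T x) (T x)).re = _
      rw [move2 A hA hTs x (T x)]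
      rfl
    have h1 : vnormA A (T x) ^ 2 ≤ vnormA A (R x) := by
      calc vnormA A (T x) ^ 2 = (innA A x (R x)).re := e1
        _ ≤ ‖innA A x (R x)‖ := Complex.re_le_norm _
        _ ≤ vnormA A x * vnormA A (R x) := semiCS A hA _ _
        _ = vnormA A (R x) := by rw [hx, one_mul]
    have h2 : vnormA A (R x) ≤ ‖R‖ := bounded_aux A hA R hRmove x hx
    exact vnorm_le_of_sq_le (norm_nonneg R) (h1.trans h2) (vnormA_nonneg A _)
  have hwbdd : BddAbove {r : ℝ | ∃ x : H, vnormA A x = 1 ∧ r = ‖innA A (T x) x‖} := by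
    refine ⟨Real.sqrt ‖R‖, ?_⟩
    rintro r ⟨x, hx, rfl⟩
    calc ‖innA A (T x) x‖ ≤ vnormA A (T x) * vnormA A x := semiCS A hA _ _
      _ = vnormA A (T x) := by rw [hx, mul_one]
      _ ≤ Real.sqrt ‖R‖ := hTbound x hx
  have hwnn : 0 ≤ wA A T := by
    apply Real.sSup_nonneg
    rintro r ⟨x, hx, rfl⟩
    exact norm_nonneg _
  have hwmem : ∀ x : H, vnormA A x = 1 → ‖innA A (T x) x‖ ≤ wA A T :=
    fun x hx => le_csSup hwbdd ⟨x, hx, rfl⟩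
  set B := Real.sqrt 2 * wA A T with hB
  have hBnn : 0 ≤ B := mul_nonneg (Real.sqrt_nonneg 2) hwnn
  have hunit : ∀ v : H, vnormA A v = 1 → ‖innA A (S v) v‖ ≤ B :=
    fun v hv => (hSval v hv).trans
      (mul_le_mul_of_nonneg_left (hwmem v hv) (Real.sqrt_nonneg 2))
  have hall : ∀ u : H, ‖innA A (S u) u‖ ≤ B * vnormA A u ^ 2 := by
    intro u
    rcases eq_or_lt_of_le (vnormA_nonneg A u) with h0 | h0
    · have h1 : ‖innA A (S u) u‖ ≤ vnormA A (S u) * vnormA A u := semiCS A hA _ _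
      rw [← h0, mul_zero] at h1
      rw [← h0]
      simpa using h1
    · set c := (vnormA A u)⁻¹ with hc
      have hcpos : 0 < c := inv_pos.mpr h0
      have hvu : vnormA A ((c : ℂ) • u) = 1 := by
        rw [vnormA_smul]
        simp only [Complex.norm_real, Real.norm_eq_abs, abs_of_pos hcpos, hc, abs_inv, abs_of_pos h0]
        field_simp
      have hval : innA A (S ((c : ℂ) • u)) ((c : ℂ) • u) = (c : ℂ) * (c : ℂ) * innA A (S u) u := by
        rw [map_smul, innA_smul_smul]
        simp [Complex.conj_ofReal]
      have hu := hunit _ hvu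
      rw [hval] at hu
      have habs : ‖(c : ℂ) * (c : ℂ) * innA A (S u) u‖
          = c ^ 2 * ‖innA A (S u) u‖ := by
        rw [norm_mul, norm_mul, Complex.norm_real, Real.norm_eq_abs, abs_of_pos hcpos]
        ring
      rw [habs] at hu
      have hv2 : vnormA A u ^ 2 * c ^ 2 = 1 := by
        rw [hc]
        field_simp
      calc ‖innA A (S u) u‖
          = vnormA A u ^ 2 * c ^ 2 * ‖innA A (S u) u‖ := by rw [hv2, one_mul]
        _ = vnormA A u ^ 2 * (c ^ 2 * ‖innA A (S u) u‖) := by ring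
        _ ≤ vnormA A u ^ 2 * B := mul_le_mul_of_nonneg_left hu (sq_nonneg _)
        _ = B * vnormA A u ^ 2 := by ring
  have expand_addS : ∀ u v : H, innA A (S (u + v)) (u + v)
      = innA A (S u) u + innA A (S u) v + innA A (S v) u + innA A (S v) v := by
    intro u v
    simp only [innA, map_add, inner_add_left, inner_add_right]
    ring
  have expand_subS : ∀ u v : H, innA A (S (u - v)) (u - v)
      = innA A (S u) u - innA A (S u) v - innA A (S v) u + innA A (S v) v := by
    intro u v
    simp only [innA, map_sub, inner_sub_left, inner_sub_right]
    ring
  have expand_add : ∀ u v : H, innA A (u + v) (u + v)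
      = innA A u u + innA A u v + innA A v u + innA A v v := by
    intro u v
    simp only [innA, map_add, inner_add_left, inner_add_right]
    ring
  have expand_sub : ∀ u v : H, innA A (u - v) (u - v)
      = innA A u u - innA A u v - innA A v u + innA A v v := by
    intro u v
    simp only [innA, map_sub, inner_sub_left, inner_sub_right]
    ring
  have hRe : ∀ x y : H, vnormA A x = 1 → vnormA A y = 1 → (innA A (S x) y).re ≤ B := by
    intro x y hx hy
    have hconj : innA A (S y) x = starRingEnd ℂ (innA A (S x) y) := by
      rw [hSmove y x, innA_symm A hA (S x) y]
    have h4re : 4 * (innA A (S x) y).re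
        = (innA A (S (x + y)) (x + y)).re - (innA A (S (x - y)) (x - y)).re := by
      rw [expand_addS, expand_subS, hconj]
      simp only [Complex.add_re, Complex.sub_re, Complex.conj_re]
      ring
    have hpar : vnormA A (x + y) ^ 2 + vnormA A (x - y) ^ 2 = 4 := by
      have hx2 : (innA A x x).re = 1 := by rw [← vnormA_sq A hA, hx]; norm_num
      have hy2 : (innA A y y).re = 1 := by rw [← vnormA_sq A hA, hy]; norm_num
      rw [vnormA_sq A hA, vnormA_sq A hA, expand_add, expand_sub]
      simp only [Complex.add_re, Complex.sub_re]
      rw [hx2, hy2]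
      ring
    have ha1 := hall (x + y)
    have ha2 := hall (x - y)
    have hr1 : (innA A (S (x + y)) (x + y)).re ≤ ‖innA A (S (x + y)) (x + y)‖ :=
      Complex.re_le_norm _
    have hr2 : -(‖innA A (S (x - y)) (x - y)‖) ≤ (innA A (S (x - y)) (x - y)).re := by
      have := Complex.abs_re_le_norm (innA A (S (x - y)) (x - y))
      cases abs_le.mp this with
      | intro h1 h2 => exact h1
    have hsum : B * vnormA A (x + y) ^ 2 + B * vnormA A (x - y) ^ 2 = 4 * B := by
      rw [← mul_add, hpar]; ring
    linarith
  have hnorm : ∀ x : H, vnormA A x = 1 → vnormA A (S x) ≤ B := by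
    intro x hx
    rcases eq_or_lt_of_le (vnormA_nonneg A (S x)) with h0 | h0
    · rw [← h0]; exact hBnn
    · set d := (vnormA A (S x))⁻¹ with hd
      have hdpos : 0 < d := inv_pos.mpr h0
      have hy : vnormA A ((d : ℂ) • S x) = 1 := by
        rw [vnormA_smul]
        simp only [Complex.norm_real, Real.norm_eq_abs, abs_of_pos hdpos, hd, abs_inv, abs_of_pos h0]
        field_simp
      have hre := hRe x ((d : ℂ) • S x) hx hy
      have heval : (innA A (S x) ((d : ℂ) • S x)).re = d * vnormA A (S x) ^ 2 := by
        rw [show innA A (S x) ((d : ℂ) • S x) = (d : ℂ) * innA A (S x) (S x) from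
          inner_smul_right _ _ _]
        rw [Complex.re_ofReal_mul, ← vnormA_sq A hA]
      rw [heval] at hre
      have hfin : d * vnormA A (S x) ^ 2 = vnormA A (S x) := by
        rw [hd]
        field_simp
      linarith [hfin ▸ hre]
  have hop : opnormA A S ≤ B := by
    apply Real.sSup_le
    · rintro r ⟨x, hx, rfl⟩
      exact hnorm x hx
    · exact hBnn
  have hs2 : (0 : ℝ) < Real.sqrt 2 := Real.sqrt_pos.mpr two_pos
  calc (1 / Real.sqrt 2) * opnormA A S ≤ (1 / Real.sqrt 2) * B :=
        mul_le_mul_of_nonneg_left hop (by positivity)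
    _ = wA A T := by rw [hB]; field_simp


lemma abs_re_sub_im (z : ℂ) : |z.re - z.im| ≤ Real.sqrt 2 * ‖z‖ := by
  have habs : ‖z‖ = Real.sqrt (z.re ^ 2 + z.im ^ 2) := by
    rw [Complex.norm_def, Complex.normSq_apply]; ring_nf
  rw [habs, ← Real.sqrt_mul (by norm_num : (0:ℝ) ≤ 2), ← Real.sqrt_sq_eq_abs]
  apply Real.sqrt_le_sqrt
  nlinarith [sq_nonneg (z.re + z.im)]

lemma abs_re_add_im (z : ℂ) : |z.re + z.im| ≤ Real.sqrt 2 * ‖z‖ := by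
  have habs : ‖z‖ = Real.sqrt (z.re ^ 2 + z.im ^ 2) := by
    rw [Complex.norm_def, Complex.normSq_apply]; ring_nf
  rw [habs, ← Real.sqrt_mul (by norm_num : (0:ℝ) ≤ 2), ← Real.sqrt_sq_eq_abs]
  apply Real.sqrt_le_sqrt
  nlinarith [sq_nonneg (z.re - z.im)]

section inst
variable {T Ts : H →L[ℂ] H}

lemma hplus_move (hA : A.IsPositive) (hTs : IsAAdjoint A T Ts) : ∀ x y : H, innA A ((ReA T Ts + ImA T Ts) x) y
    = innA A x ((ReA T Ts + ImA T Ts) y) := by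
  intro x y
  simp only [ReA, ImA, ContinuousLinearMap.add_apply, ContinuousLinearMap.smul_apply,
    ContinuousLinearMap.sub_apply, innA, map_add, map_smul, map_sub,
    inner_add_left, inner_smul_left, inner_sub_left,
    inner_add_right, inner_smul_right, inner_sub_right]
  rw [show (inner ℂ (A (T x)) y : ℂ) = inner ℂ (A x) (Ts y) from move2 A hA hTs x y,
    show (inner ℂ (A (Ts x)) y : ℂ) = inner ℂ (A x) (T y) from move1 A hTs x y]
  simp only [map_inv₀, map_mul, Complex.conj_I, map_ofNat]
  ring

lemma hminus_move (hA : A.IsPositive) (hTs : IsAAdjoint A T Ts) : ∀ x y : H, innA A ((ReA T Ts - ImA T Ts) x) y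
    = innA A x ((ReA T Ts - ImA T Ts) y) := by
  intro x y
  simp only [ReA, ImA, ContinuousLinearMap.sub_apply, ContinuousLinearMap.smul_apply,
    ContinuousLinearMap.add_apply, innA, map_add, map_smul, map_sub,
    inner_add_left, inner_smul_left, inner_sub_left,
    inner_add_right, inner_smul_right, inner_sub_right]
  rw [show (inner ℂ (A (T x)) y : ℂ) = inner ℂ (A x) (Ts y) from move2 A hA hTs x y,
    show (inner ℂ (A (Ts x)) y : ℂ) = inner ℂ (A x) (T y) from move1 A hTs x y]
  simp only [map_inv₀, map_mul, Complex.conj_I, map_ofNat]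
  ring

lemma combo_plus (z : ℂ) :
    (starRingEnd ℂ) (2⁻¹:ℂ) * (z + (starRingEnd ℂ) z)
      + (starRingEnd ℂ) ((2*Complex.I)⁻¹) * (z - (starRingEnd ℂ) z)
      = ((z.re - z.im : ℝ) : ℂ) := by
  rw [Complex.add_conj, Complex.sub_conj]
  simp only [map_inv₀, map_mul, Complex.conj_I, map_ofNat]
  have hI : (2 * -Complex.I)⁻¹ = Complex.I / 2 := by
    rw [mul_inv, inv_neg, Complex.inv_I]; ring
  rw [hI]
  push_cast
  linear_combination (z.im : ℂ) * Complex.I_mul_I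

lemma combo_minus (z : ℂ) :
    (starRingEnd ℂ) (2⁻¹:ℂ) * (z + (starRingEnd ℂ) z)
      - (starRingEnd ℂ) ((2*Complex.I)⁻¹) * (z - (starRingEnd ℂ) z)
      = ((z.re + z.im : ℝ) : ℂ) := by
  rw [Complex.add_conj, Complex.sub_conj]
  simp only [map_inv₀, map_mul, Complex.conj_I, map_ofNat]
  have hI : (2 * -Complex.I)⁻¹ = Complex.I / 2 := by
    rw [mul_inv, inv_neg, Complex.inv_I]; ring
  rw [hI]
  push_cast
  linear_combination (-z.im : ℂ) * Complex.I_mul_I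

lemma hplus_val (hA : A.IsPositive) (hTs : IsAAdjoint A T Ts) : ∀ x : H,
    innA A ((ReA T Ts + ImA T Ts) x) x
    = (((innA A (T x) x).re - (innA A (T x) x).im : ℝ) : ℂ) := by
  intro x
  have hts : (inner ℂ (A (Ts x)) x : ℂ) = starRingEnd ℂ (inner ℂ (A (T x)) x) := by
    have h1 := move1 A hTs x x
    have h2 := innA_symm A hA (T x) x
    simp only [innA] at h1 h2
    rw [h1, h2]
  have e1 : innA A ((ReA T Ts + ImA T Ts) x) x
      = (starRingEnd ℂ) (2⁻¹:ℂ) * ((inner ℂ (A (T x)) x : ℂ) + starRingEnd ℂ (inner ℂ (A (T x)) x : ℂ))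
        + (starRingEnd ℂ) ((2*Complex.I)⁻¹)
          * ((inner ℂ (A (T x)) x : ℂ) - starRingEnd ℂ (inner ℂ (A (T x)) x : ℂ)) := by
    simp only [ReA, ImA, ContinuousLinearMap.add_apply, ContinuousLinearMap.smul_apply,
      ContinuousLinearMap.sub_apply, innA, map_add, map_smul, map_sub,
      inner_add_left, inner_smul_left, inner_sub_left]
    try rw [hts]
    try ring
  rw [e1, combo_plus]
  simp only [innA]

lemma hminus_val (hA : A.IsPositive) (hTs : IsAAdjoint A T Ts) : ∀ x : H,
    innA A ((ReA T Ts - ImA T Ts) x) x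
    = (((innA A (T x) x).re + (innA A (T x) x).im : ℝ) : ℂ) := by
  intro x
  have hts : (inner ℂ (A (Ts x)) x : ℂ) = starRingEnd ℂ (inner ℂ (A (T x)) x) := by
    have h1 := move1 A hTs x x
    have h2 := innA_symm A hA (T x) x
    simp only [innA] at h1 h2
    rw [h1, h2]
  have e1 : innA A ((ReA T Ts - ImA T Ts) x) x
      = (starRingEnd ℂ) (2⁻¹:ℂ) * ((inner ℂ (A (T x)) x : ℂ) + starRingEnd ℂ (inner ℂ (A (T x)) x : ℂ))
        - (starRingEnd ℂ) ((2*Complex.I)⁻¹)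
          * ((inner ℂ (A (T x)) x : ℂ) - starRingEnd ℂ (inner ℂ (A (T x)) x : ℂ)) := by
    simp only [ReA, ImA, ContinuousLinearMap.add_apply, ContinuousLinearMap.smul_apply,
      ContinuousLinearMap.sub_apply, innA, map_add, map_smul, map_sub,
      inner_add_left, inner_smul_left, inner_sub_left]
    try rw [hts]
    try ring
  rw [e1, combo_minus]
  simp only [innA]

end inst


end AuxLemmas

theorem stmt11 (A T Ts : H →L[ℂ] H) (hA : A.IsPositive) (hTs : IsAAdjoint A T Ts) :
    wA A T ≥ (1 / Real.sqrt 2) * opnormA A (ReA T Ts + ImA T Ts) ∧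
      wA A T ≥ (1 / Real.sqrt 2) * opnormA A (ReA T Ts - ImA T Ts) := by
  constructor
  · exact key_ineq A hA T Ts _ hTs (hplus_move A hA hTs) (fun x _ => by
      rw [hplus_val A hA hTs x, Complex.norm_real, Real.norm_eq_abs]
      exact abs_re_sub_im _)
  · exact key_ineq A hA T Ts _ hTs (hminus_move A hA hTs) (fun x _ => by
      rw [hminus_val A hA hTs x, Complex.norm_real, Real.norm_eq_abs]
      exact abs_re_add_im _)
end
end

section
/- Let T be a bounded linear operator on H admitting an A-adjoint T♯. Then w_A(T) ≥ √( (1/4)‖T♯∘T + T∘T♯‖_A + (1/4)| ‖Re_A(T) + Im_A(T)‖_A² − ‖Re_A(T) − Im_A(T)‖_A² | ). -/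
set_option synthInstance.maxHeartbeats 1000000
set_option maxHeartbeats 1000000
set_option linter.unusedSectionVars false


noncomputable section

open Complex ContinuousLinearMap

variable {H : Type*} [NormedAddCommGroup H] [InnerProductSpace ℂ H] [CompleteSpace H]

lemma sqA_inner (A R : H →L[ℂ] H) (hRR : R * R = A) (hR : IsSelfAdjoint R) (x y : H) :
    innA A x y = @inner ℂ _ _ (R x) (R y) := by
  rw [innA, ← hRR, ContinuousLinearMap.mul_apply]
  rw [← ContinuousLinearMap.adjoint_inner_left, hR.adjoint_eq]

lemma vnormA_eq (A R : H →L[ℂ] H) (hRR : R * R = A) (hR : IsSelfAdjoint R) (x : H) :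
    vnormA A x = ‖R x‖ := by
  rw [vnormA, sqA_inner A R hRR hR]
  have h := inner_self_eq_norm_sq (𝕜 := ℂ) (R x)
  simp only [RCLike.re_to_complex] at h
  rw [h, Real.sqrt_sq (norm_nonneg _)]

-- push lemma
lemma pushA (A S Q : H →L[ℂ] H) (h : A * Q = star S * A) (x y : H) :
    @inner ℂ _ _ (A (Q x)) y = @inner ℂ _ _ (A x) (S y) := by
  have h1 : A (Q x) = (ContinuousLinearMap.adjoint S) (A x) := by
    rw [← star_eq_adjoint, ← ContinuousLinearMap.mul_apply, h, ContinuousLinearMap.mul_apply]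
  rw [h1, ContinuousLinearMap.adjoint_inner_left]

lemma aselfA_pow (A S : H →L[ℂ] H) (hS : A * S = star S * A) (m : ℕ) :
    A * S ^ m = star (S ^ m) * A := by
  induction m with
  | zero => simp
  | succ n ih =>
      rw [pow_succ, ← mul_assoc, ih, mul_assoc, hS, ← mul_assoc, ← star_mul, ← pow_succ, ← pow_succ']

lemma sqA_inner' (A R : H →L[ℂ] H) (hRR : R * R = A) (hR : IsSelfAdjoint R) (x y : H) :
    @inner ℂ _ _ (A x) y = @inner ℂ _ _ (R x) (R y) := sqA_inner A R hRR hR x y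

lemma normRsq (A R : H →L[ℂ] H) (hRR : R * R = A) (hR : IsSelfAdjoint R) (v : H) :
    ‖R v‖ ^ 2 = (@inner ℂ _ _ (A v) v).re := by
  have h := inner_self_eq_norm_sq (𝕜 := ℂ) (R v)
  simp only [RCLike.re_to_complex] at h
  rw [← h, sqA_inner' A R hRR hR]

lemma re_le_normmul (u v : H) : (@inner ℂ _ _ u v).re ≤ ‖u‖ * ‖v‖ := by
  calc (@inner ℂ _ _ u v).re ≤ |(@inner ℂ _ _ u v).re| := le_abs_self _
    _ ≤ ‖@inner ℂ _ _ u v‖ := Complex.abs_re_le_norm _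
    _ = ‖(@inner ℂ _ _ u v)‖ := rfl
    _ ≤ ‖u‖ * ‖v‖ := norm_inner_le_norm _ _

lemma keyA (A R S : H →L[ℂ] H) (hRR : R * R = A) (hR : IsSelfAdjoint R)
    (hS : A * S = star S * A) (x : H) : ‖R (S x)‖ ≤ ‖S‖ * ‖R x‖ := by
  -- squared step
  have sqstep : ∀ (m : ℕ) (u : H),
      ‖R ((S ^ m) u)‖ ^ 2 ≤ ‖R ((S ^ (2 * m)) u)‖ * ‖R u‖ := by
    intro m u
    have h1 : (‖R ((S ^ m) u)‖ : ℝ) ^ 2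
        = (@inner ℂ _ _ (A ((S ^ m) u)) ((S ^ m) u)).re := normRsq A R hRR hR _
    have h2 : @inner ℂ _ _ (A ((S ^ m) u)) ((S ^ m) u)
        = @inner ℂ _ _ (A u) ((S ^ (2 * m)) u) := by
      rw [pushA A (S ^ m) (S ^ m) (aselfA_pow A S hS m)]
      congr 1
      rw [← ContinuousLinearMap.mul_apply, ← pow_add, two_mul]
    rw [h1, h2, sqA_inner' A R hRR hR]
    calc (@inner ℂ _ _ (R u) (R ((S ^ (2 * m)) u))).re
        ≤ ‖R u‖ * ‖R ((S ^ (2 * m)) u)‖ := re_le_normmul _ _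
      _ = ‖R ((S ^ (2 * m)) u)‖ * ‖R u‖ := mul_comm _ _
  have claim : ∀ n : ℕ, ‖R (S x)‖ ^ (2 ^ n)
      ≤ ‖R ((S ^ (2 ^ n)) x)‖ * ‖R x‖ ^ (2 ^ n - 1) := by
    intro n
    induction n with
    | zero => simp
    | succ n ih =>
        have e1 : ‖R (S x)‖ ^ (2 ^ (n + 1)) = (‖R (S x)‖ ^ (2 ^ n)) ^ 2 := by
          rw [← pow_mul, pow_succ]
        have e2 : (‖R (S x)‖ ^ (2 ^ n)) ^ 2
            ≤ (‖R ((S ^ (2 ^ n)) x)‖ * ‖R x‖ ^ (2 ^ n - 1)) ^ 2 :=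
          pow_le_pow_left₀ (by positivity) ih 2
        have e3 : (‖R ((S ^ (2 ^ n)) x)‖ * ‖R x‖ ^ (2 ^ n - 1)) ^ 2
            = ‖R ((S ^ (2 ^ n)) x)‖ ^ 2 * (‖R x‖ ^ (2 ^ n - 1)) ^ 2 := mul_pow _ _ _
        have e4 : ‖R ((S ^ (2 ^ n)) x)‖ ^ 2 * (‖R x‖ ^ (2 ^ n - 1)) ^ 2
            ≤ (‖R ((S ^ (2 * 2 ^ n)) x)‖ * ‖R x‖) * (‖R x‖ ^ (2 ^ n - 1)) ^ 2 := by
          apply mul_le_mul_of_nonneg_right (sqstep (2 ^ n) x) (by positivity)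
        have hle : (1 : ℕ) ≤ 2 ^ n := Nat.one_le_pow _ _ (by norm_num)
        have e5 : (‖R ((S ^ (2 * 2 ^ n)) x)‖ * ‖R x‖) * (‖R x‖ ^ (2 ^ n - 1)) ^ 2
            = ‖R ((S ^ (2 ^ (n + 1))) x)‖ * ‖R x‖ ^ (2 ^ (n + 1) - 1) := by
          rw [← pow_mul, pow_succ, mul_comm (2 ^ n) 2]
          rw [mul_assoc]
          congr 1
          rw [← pow_succ']
          congr 1
          omega
        calc ‖R (S x)‖ ^ (2 ^ (n + 1)) = (‖R (S x)‖ ^ (2 ^ n)) ^ 2 := e1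
          _ ≤ _ := e2
          _ = _ := e3
          _ ≤ _ := e4
          _ = _ := e5
  -- conclude
  by_contra hcon
  push_neg at hcon
  set a := ‖R (S x)‖ with ha
  set b := ‖S‖ * ‖R x‖ with hb
  have hb0 : 0 ≤ b := by positivity
  have ha0 : 0 < a := lt_of_le_of_lt hb0 hcon
  have hRx : 0 < ‖R x‖ := by
    rcases eq_or_lt_of_le (norm_nonneg (R x)) with h | h
    · exfalso
      have := sqstep 1 x
      simp only [pow_one, ← h] at this
      have ha2 : a ^ 2 ≤ 0 := by
        rw [ha]
        simpa using this
      nlinarith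
    · exact h
  have hSn : 0 < ‖S‖ := by
    rcases eq_or_lt_of_le (norm_nonneg S) with h | h
    · exfalso
      have hS0 : S = 0 := norm_eq_zero.mp h.symm
      have : a = 0 := by rw [ha, hS0]; simp
      linarith
    · exact h
  have hbpos : 0 < b := mul_pos hSn hRx
  have hq1 : 1 < a / b := (one_lt_div hbpos).2 hcon
  obtain ⟨n, hn⟩ := pow_unbounded_of_one_lt (‖R‖ * ‖x‖ / ‖R x‖) hq1
  have hqn : (a / b) ^ n ≤ (a / b) ^ (2 ^ n) :=
    pow_le_pow_right₀ (le_of_lt hq1) (Nat.le_of_lt (Nat.lt_two_pow_self (n := n)))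
  have hbound : (a / b) ^ (2 ^ n) ≤ ‖R‖ * ‖x‖ / ‖R x‖ := by
    rw [div_pow, div_le_div_iff₀ (by positivity) hRx]
    have c1 := claim n
    have c2 : ‖R ((S ^ (2 ^ n)) x)‖ ≤ ‖R‖ * (‖S‖ ^ (2 ^ n) * ‖x‖) := by
      calc ‖R ((S ^ (2 ^ n)) x)‖ ≤ ‖R‖ * ‖(S ^ (2 ^ n)) x‖ := le_opNorm _ _
        _ ≤ ‖R‖ * (‖S ^ (2 ^ n)‖ * ‖x‖) := by
            apply mul_le_mul_of_nonneg_left (le_opNorm _ _) (norm_nonneg _)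
        _ ≤ ‖R‖ * (‖S‖ ^ (2 ^ n) * ‖x‖) := by
            apply mul_le_mul_of_nonneg_left _ (norm_nonneg _)
            apply mul_le_mul_of_nonneg_right _ (norm_nonneg _)
            exact norm_pow_le' S (by positivity)
    have hle : (1 : ℕ) ≤ 2 ^ n := Nat.one_le_pow _ _ (by norm_num)
    have e6 : b ^ (2 ^ n) = ‖S‖ ^ (2 ^ n) * (‖R x‖ ^ (2 ^ n - 1) * ‖R x‖) := by
      rw [hb, mul_pow]
      congr 1
      rw [← pow_succ]
      congr 1
      omega
    calc a ^ 2 ^ n * ‖R x‖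
        ≤ (‖R ((S ^ (2 ^ n)) x)‖ * ‖R x‖ ^ (2 ^ n - 1)) * ‖R x‖ := by
          exact mul_le_mul_of_nonneg_right c1 (le_of_lt hRx)
      _ ≤ ((‖R‖ * (‖S‖ ^ (2 ^ n) * ‖x‖)) * ‖R x‖ ^ (2 ^ n - 1)) * ‖R x‖ := by
          have h7 := mul_le_mul_of_nonneg_right c2 (pow_nonneg (norm_nonneg (R x)) (2 ^ n - 1))
          exact mul_le_mul_of_nonneg_right h7 (le_of_lt hRx)
      _ = ‖R‖ * ‖x‖ * b ^ (2 ^ n) := by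
          rw [e6]; ring
  have := lt_of_lt_of_le (lt_of_lt_of_le hn hqn) hbound
  exact lt_irrefl _ this

lemma absInnA_le (A R : H →L[ℂ] H) (hRR : R * R = A) (hR : IsSelfAdjoint R) (u y : H) :
    ‖innA A u y‖ ≤ ‖R u‖ * ‖R y‖ := by
  rw [innA, sqA_inner' A R hRR hR]
  exact norm_inner_le_norm _ _

lemma unit_smul (A R : H →L[ℂ] H) (hRR : R * R = A) (hR : IsSelfAdjoint R) (u : H)
    (hu : ‖R u‖ ≠ 0) : ‖R (((‖R u‖ : ℂ))⁻¹ • u)‖ = 1 := by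
  rw [map_smul, norm_smul]
  simp only [norm_inv, Complex.norm_real, Real.norm_eq_abs, abs_norm]
  field_simp

lemma bddAbove_opA (A R : H →L[ℂ] H) (hRR : R * R = A) (hR : IsSelfAdjoint R)
    (S : H →L[ℂ] H) (hS : A * S = star S * A) :
    BddAbove {r : ℝ | ∃ x : H, vnormA A x = 1 ∧ r = vnormA A (S x)} := by
  refine ⟨‖S‖, ?_⟩
  rintro r ⟨x, hx, rfl⟩
  rw [vnormA_eq A R hRR hR] at hx ⊢
  calc ‖R (S x)‖ ≤ ‖S‖ * ‖R x‖ := keyA A R S hRR hR hS x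
    _ = ‖S‖ := by rw [hx, mul_one]

lemma homA (A R : H →L[ℂ] H) (hRR : R * R = A) (hR : IsSelfAdjoint R)
    (S : H →L[ℂ] H) (hS : A * S = star S * A) (u : H) :
    ‖R (S u)‖ ≤ opnormA A S * ‖R u‖ := by
  by_cases h0 : ‖R u‖ = 0
  · rw [h0, mul_zero]
    have := keyA A R S hRR hR hS u
    rw [h0, mul_zero] at this
    exact this
  · set c : ℝ := ‖R u‖ with hc
    have hcpos : 0 < c := lt_of_le_of_ne (norm_nonneg _) (Ne.symm h0)
    set v : H := ((c : ℂ))⁻¹ • u with hv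
    have hv1 : ‖R v‖ = 1 := unit_smul A R hRR hR u h0
    have hmem : vnormA A (S v) ∈
        {r : ℝ | ∃ x : H, vnormA A x = 1 ∧ r = vnormA A (S x)} :=
      ⟨v, by rw [vnormA_eq A R hRR hR]; exact hv1, rfl⟩
    have hle : vnormA A (S v) ≤ opnormA A S :=
      le_csSup (bddAbove_opA A R hRR hR S hS) hmem
    have heq : vnormA A (S v) = c⁻¹ * ‖R (S u)‖ := by
      rw [vnormA_eq A R hRR hR, hv, map_smul, map_smul, norm_smul]
      simp [norm_inv, Complex.norm_real, Real.norm_eq_abs, abs_of_pos hcpos]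
    rw [heq] at hle
    calc ‖R (S u)‖ = c * (c⁻¹ * ‖R (S u)‖) := by field_simp
      _ ≤ c * opnormA A S := by
          apply mul_le_mul_of_nonneg_left hle (le_of_lt hcpos)
      _ = opnormA A S * c := mul_comm _ _

lemma bddAbove_wA (A R : H →L[ℂ] H) (hRR : R * R = A) (hR : IsSelfAdjoint R)
    (S : H →L[ℂ] H) (c : ℝ) (hb : ∀ x : H, ‖R (S x)‖ ≤ c * ‖R x‖) :
    BddAbove {r : ℝ | ∃ x : H, vnormA A x = 1 ∧ r = ‖innA A (S x) x‖} := by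
  refine ⟨c, ?_⟩
  rintro r ⟨x, hx, rfl⟩
  rw [vnormA_eq A R hRR hR] at hx
  calc ‖innA A (S x) x‖ ≤ ‖R (S x)‖ * ‖R x‖ := absInnA_le A R hRR hR _ _
    _ ≤ (c * ‖R x‖) * ‖R x‖ := by
        apply mul_le_mul_of_nonneg_right (hb x) (norm_nonneg _)
    _ = c := by rw [hx]; ring

lemma op_le_wA (A R : H →L[ℂ] H) (hRR : R * R = A) (hR : IsSelfAdjoint R)
    (hAsa : IsSelfAdjoint A) (S : H →L[ℂ] H) (hS : A * S = star S * A)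
    (x₀ : H) (hx₀ : ‖R x₀‖ = 1) : opnormA A S ≤ wA A S := by
  have hWbdd : BddAbove {r : ℝ | ∃ x : H, vnormA A x = 1 ∧
      r = ‖innA A (S x) x‖} :=
    bddAbove_wA A R hRR hR S ‖S‖ (keyA A R S hRR hR hS)
  have hx₀mem : ‖innA A (S x₀) x₀‖ ∈ {r : ℝ | ∃ x : H, vnormA A x = 1 ∧
      r = ‖innA A (S x) x‖} :=
    ⟨x₀, by rw [vnormA_eq A R hRR hR]; exact hx₀, rfl⟩
  have hw0 : 0 ≤ wA A S :=
    le_trans (norm_nonneg _) (le_csSup hWbdd hx₀mem)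
  -- quadratic form bound
  have hm : ∀ u : H, |(innA A (S u) u).re| ≤ wA A S * ‖R u‖ ^ 2 := by
    intro u
    by_cases h0 : ‖R u‖ = 0
    · have h1 : ‖innA A (S u) u‖ ≤ 0 := by
        calc ‖innA A (S u) u‖ ≤ ‖R (S u)‖ * ‖R u‖ := absInnA_le A R hRR hR _ _
          _ = 0 := by rw [h0, mul_zero]
      have h2 := Complex.abs_re_le_norm (innA A (S u) u)
      rw [h0]
      nlinarith
    · set c : ℝ := ‖R u‖ with hc
      have hcpos : 0 < c := lt_of_le_of_ne (norm_nonneg _) (Ne.symm h0)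
      set v : H := ((c : ℂ))⁻¹ • u with hv
      have hv1 : ‖R v‖ = 1 := unit_smul A R hRR hR u h0
      have hle : ‖innA A (S v) v‖ ≤ wA A S :=
        le_csSup hWbdd ⟨v, by rw [vnormA_eq A R hRR hR]; exact hv1, rfl⟩
      have hval : innA A (S v) v = ((c : ℂ))⁻¹ * ((starRingEnd ℂ) ((c : ℂ))⁻¹
          * innA A (S u) u) := by
        rw [hv, innA, innA, map_smul, map_smul, inner_smul_left, inner_smul_right]
        ring
      have habs : ‖innA A (S v) v‖ = c⁻¹ * (c⁻¹ * ‖innA A (S u) u‖) := by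
        rw [hval, norm_mul, norm_mul]
        simp [norm_inv, Complex.norm_real, Real.norm_eq_abs, abs_of_pos hcpos]
      have h3 : ‖innA A (S u) u‖ ≤ wA A S * c ^ 2 := by
        rw [habs] at hle
        have := mul_le_mul_of_nonneg_left hle (le_of_lt (mul_pos hcpos hcpos))
        calc ‖innA A (S u) u‖
            = (c * c) * (c⁻¹ * (c⁻¹ * ‖innA A (S u) u‖)) := by field_simp
          _ ≤ (c * c) * wA A S := this
          _ = wA A S * c ^ 2 := by ring
      have h4 := Complex.abs_re_le_norm (innA A (S u) u)
      linarith
  -- polarization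
  apply Real.sSup_le _ hw0
  rintro r ⟨x, hx, rfl⟩
  rw [vnormA_eq A R hRR hR] at hx ⊢
  by_cases hc0 : ‖R (S x)‖ = 0
  · rw [hc0]; exact hw0
  · set cx : ℝ := ‖R (S x)‖ with hcx
    have hcpos : 0 < cx := lt_of_le_of_ne (norm_nonneg _) (Ne.symm hc0)
    set y : H := ((cx : ℂ))⁻¹ • S x with hy
    have hy1 : ‖R y‖ = 1 := unit_smul A R hRR hR (S x) hc0
    -- the inner product ⟪A (S x), y⟫ is real and equals cx
    have hre : (@inner ℂ _ _ (A (S x)) y).re = cx := by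
      rw [hy, inner_smul_right]
      have : @inner ℂ _ _ (A (S x)) (S x) = ((cx : ℂ)) ^ 2 := by
        rw [sqA_inner' A R hRR hR, inner_self_eq_norm_sq_to_K]
        norm_cast
      rw [this]
      have hcxne : ((cx : ℂ)) ≠ 0 := by
        exact_mod_cast ne_of_gt hcpos
      have : ((cx : ℂ))⁻¹ * ((cx : ℂ)) ^ 2 = ((cx : ℂ)) := by
        field_simp
      rw [this, Complex.ofReal_re]
    -- conjugate symmetry
    have hconj : ∀ u w : H, @inner ℂ _ _ (A (S w)) u
        = (starRingEnd ℂ) (@inner ℂ _ _ (A (S u)) w) := by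
      intro u w
      have hASsa : IsSelfAdjoint (A * S) := by
        rw [IsSelfAdjoint, star_mul, hAsa.star_eq, ← hS]
      have h1 : A (S w) = (A * S) w := rfl
      have h2 : A (S u) = (A * S) u := rfl
      rw [h1, h2, ← hASsa.adjoint_eq, ContinuousLinearMap.adjoint_inner_left,
        ← inner_conj_symm, hASsa.adjoint_eq]
    -- expansion
    have hexp : (@inner ℂ _ _ (A (S (x + y))) (x + y)).re
        - (@inner ℂ _ _ (A (S (x - y))) (x - y)).re
        = 4 * (@inner ℂ _ _ (A (S x)) y).re := by
      have e1 : @inner ℂ _ _ (A (S (x + y))) (x + y)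
          = @inner ℂ _ _ (A (S x)) x + @inner ℂ _ _ (A (S x)) y
            + @inner ℂ _ _ (A (S y)) x + @inner ℂ _ _ (A (S y)) y := by
        simp [map_add, inner_add_left, inner_add_right]
        ring
      have e2 : @inner ℂ _ _ (A (S (x - y))) (x - y)
          = @inner ℂ _ _ (A (S x)) x - @inner ℂ _ _ (A (S x)) y
            - @inner ℂ _ _ (A (S y)) x + @inner ℂ _ _ (A (S y)) y := by
        simp [map_sub, inner_sub_left, inner_sub_right]
        ring
      rw [e1, e2, hconj x y]
      simp only [Complex.add_re, Complex.sub_re, Complex.conj_re]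
      ring
    have hb1 := hm (x + y)
    have hb2 := hm (x - y)
    have hpar : ‖R (x + y)‖ ^ 2 + ‖R (x - y)‖ ^ 2 = 4 := by
      have := parallelogram_law_with_norm ℂ (R x) (R y)
      rw [map_add, map_sub]
      rw [hx] at *
      rw [hy1] at *
      nlinarith [this]
    have habs1 : |(innA A (S (x+y)) (x+y)).re| = |(@inner ℂ _ _ (A (S (x+y))) (x+y)).re| := rfl
    have habs2 : |(innA A (S (x-y)) (x-y)).re| = |(@inner ℂ _ _ (A (S (x-y))) (x-y)).re| := rfl
    rw [habs1] at hb1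
    rw [habs2] at hb2
    have l1 : (@inner ℂ _ _ (A (S (x+y))) (x+y)).re ≤ wA A S * ‖R (x+y)‖^2 :=
      le_trans (le_abs_self _) hb1
    have l2 : -(@inner ℂ _ _ (A (S (x-y))) (x-y)).re ≤ wA A S * ‖R (x-y)‖^2 :=
      le_trans (neg_le_abs _) hb2
    nlinarith [hre, hexp, hpar, hw0, sq_nonneg (‖R (x+y)‖ - ‖R (x-y)‖)]

lemma conj_half : (starRingEnd ℂ) (2:ℂ)⁻¹ = (2:ℂ)⁻¹ := by
  simp [Complex.ext_iff]

lemma conj_halfI : (starRingEnd ℂ) ((2:ℂ) * Complex.I)⁻¹ = -((2:ℂ) * Complex.I)⁻¹ := by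
  rw [map_inv₀, map_mul, Complex.conj_I]
  rw [show (starRingEnd ℂ) 2 = 2 by simp [Complex.ext_iff]]
  simp [inv_neg]

lemma star_half : star ((2:ℂ))⁻¹ = (2:ℂ)⁻¹ := conj_half

lemma star_halfI : star ((2:ℂ) * Complex.I)⁻¹ = -((2:ℂ) * Complex.I)⁻¹ := conj_halfI

lemma cidP (z : ℂ) : (starRingEnd ℂ) (2:ℂ)⁻¹ * (z + (starRingEnd ℂ) z)
    + (starRingEnd ℂ) ((2:ℂ) * Complex.I)⁻¹ * (z - (starRingEnd ℂ) z)
    = ((z.re - z.im : ℝ) : ℂ) := by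
  rw [conj_half, conj_halfI, Complex.add_conj, Complex.sub_conj]
  have h2 : ((2:ℂ) * Complex.I)⁻¹ = -((2:ℂ)⁻¹) * Complex.I := by
    rw [mul_inv, Complex.inv_I]
    ring
  rw [h2]
  apply Complex.ext <;>
    simp [Complex.mul_re, Complex.mul_im, Complex.I_re, Complex.I_im] <;> ring

lemma cidM (z : ℂ) : (starRingEnd ℂ) (2:ℂ)⁻¹ * (z + (starRingEnd ℂ) z)
    - (starRingEnd ℂ) ((2:ℂ) * Complex.I)⁻¹ * (z - (starRingEnd ℂ) z)
    = ((z.re + z.im : ℝ) : ℂ) := by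
  rw [conj_half, conj_halfI, Complex.add_conj, Complex.sub_conj]
  have h2 : ((2:ℂ) * Complex.I)⁻¹ = -((2:ℂ)⁻¹) * Complex.I := by
    rw [mul_inv, Complex.inv_I]
    ring
  rw [h2]
  apply Complex.ext <;>
    simp [Complex.mul_re, Complex.mul_im, Complex.I_re, Complex.I_im] <;> ring

lemma sqrt2_sub (a b : ℝ) : |a - b| ≤ Real.sqrt 2 * Real.sqrt (a^2 + b^2) := by
  rw [← Real.sqrt_sq_eq_abs, ← Real.sqrt_mul (by norm_num : (0:ℝ) ≤ 2)]
  exact Real.sqrt_le_sqrt (by nlinarith [sq_nonneg (a + b)])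

lemma sqrt2_add (a b : ℝ) : |a + b| ≤ Real.sqrt 2 * Real.sqrt (a^2 + b^2) := by
  have := sqrt2_sub a (-b)
  simpa using this

lemma abs_eq_sqrt (z : ℂ) : ‖z‖ = Real.sqrt (z.re^2 + z.im^2) := by
  rw [Complex.norm_def, Complex.normSq_apply]
  congr 1
  ring

lemma keyTA (A R T Ts : H →L[ℂ] H) (hRR : R * R = A) (hR : IsSelfAdjoint R)
    (hT' : A * T = star Ts * A) (hTsT : A * (Ts * T) = star (Ts * T) * A) (x : H) :
    ‖R (T x)‖ ^ 2 ≤ ‖Ts * T‖ * ‖R x‖ ^ 2 := by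
  have h1 : ‖R (T x)‖ ^ 2 = (@inner ℂ _ _ (A (T x)) (T x)).re := normRsq A R hRR hR _
  have h2 : (@inner ℂ _ _ (A (T x)) (T x)) = @inner ℂ _ _ (A x) ((Ts * T) x) := by
    rw [pushA A Ts T hT', ContinuousLinearMap.mul_apply]
  rw [h1, h2, sqA_inner' A R hRR hR]
  calc (@inner ℂ _ _ (R x) (R ((Ts * T) x))).re
      ≤ ‖R x‖ * ‖R ((Ts * T) x)‖ := re_le_normmul _ _
    _ ≤ ‖R x‖ * (‖Ts * T‖ * ‖R x‖) := by
        apply mul_le_mul_of_nonneg_left (keyA A R (Ts * T) hRR hR hTsT x) (norm_nonneg _)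
    _ = ‖Ts * T‖ * ‖R x‖ ^ 2 := by ring

lemma sqsum (T Ts : H →L[ℂ] H) (x : H) :
    (Ts.comp T + T.comp Ts) x
      = (ReA T Ts + ImA T Ts) ((ReA T Ts + ImA T Ts) x)
        + (ReA T Ts - ImA T Ts) ((ReA T Ts - ImA T Ts) x) := by
  simp only [ReA, ImA, add_apply, sub_apply, smul_apply, comp_apply, map_add, map_sub,
    map_smul]
  match_scalars
  all_goals field_simp [Complex.I_ne_zero]
  all_goals ring_nf
  all_goals
    first
    | rfl
    | linear_combination (8 * Complex.I) * Complex.I_sq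
    | linear_combination (-8 * Complex.I) * Complex.I_sq
    | (simp only [show Complex.I ^ 3 = -Complex.I by rw [pow_succ, Complex.I_sq]; ring, Complex.I_sq]; ring)

theorem stmt12 (A T Ts : H →L[ℂ] H) (hA : A.IsPositive) (hTs : IsAAdjoint A T Ts) :
    wA A T ≥ Real.sqrt ((1 / 4) * opnormA A (Ts.comp T + T.comp Ts) +
      (1 / 4) * |opnormA A (ReA T Ts + ImA T Ts) ^ 2 - opnormA A (ReA T Ts - ImA T Ts) ^ 2|) := by
  have h0 : (0 : H →L[ℂ] H) ≤ A := (ContinuousLinearMap.nonneg_iff_isPositive A).2 hA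
  set R := CFC.sqrt A with hRdef
  have hRR : R * R = A := CFC.sqrt_mul_sqrt_self A h0
  have hR : IsSelfAdjoint R :=
    ((ContinuousLinearMap.nonneg_iff_isPositive R).1 (CFC.sqrt_nonneg A)).isSelfAdjoint
  have hAsa : IsSelfAdjoint A := hA.isSelfAdjoint
  by_cases hne : ∃ x₀ : H, vnormA A x₀ = 1
  · obtain ⟨x₀, hx₀v⟩ := hne
    have hx₀ : ‖R x₀‖ = 1 := by rw [← vnormA_eq A R hRR hR]; exact hx₀v
    -- star facts
    have hTs' : A * Ts = star T * A := by
      rw [star_eq_adjoint]; exact hTs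
    have hT' : A * T = star Ts * A := by
      have h1 := congrArg star hTs'
      rw [star_mul, star_mul, star_star, hAsa.star_eq] at h1
      exact h1.symm
    set P := ReA T Ts with hPdef
    set Q := ImA T Ts with hQdef
    have hPQ : A * (P + Q) = star (P + Q) * A := by
      rw [hPdef, hQdef, ReA, ImA]
      rw [star_add, star_smul, star_smul, star_add, star_sub, star_half, star_halfI]
      rw [mul_add, mul_smul_comm, mul_smul_comm, mul_add, mul_sub, hT', hTs']
      rw [add_mul, smul_mul_assoc, smul_mul_assoc, add_mul, sub_mul, neg_smul]
      module
    have hPM : A * (P - Q) = star (P - Q) * A := by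
      rw [hPdef, hQdef, ReA, ImA]
      rw [star_sub, star_smul, star_smul, star_add, star_sub, star_half, star_halfI]
      rw [mul_sub, mul_smul_comm, mul_smul_comm, mul_add, mul_sub, hT', hTs']
      rw [sub_mul, smul_mul_assoc, smul_mul_assoc, add_mul, sub_mul, neg_smul]
      module
    have hTsT : A * (Ts * T) = star (Ts * T) * A := by
      rw [← mul_assoc, hTs', mul_assoc, hT', ← mul_assoc, ← star_mul]
    -- bound for T
    have hbT : ∀ x : H, ‖R (T x)‖ ≤ Real.sqrt ‖Ts * T‖ * ‖R x‖ := by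
      intro x
      have h1 := keyTA A R T Ts hRR hR hT' hTsT x
      have h2 : ‖R (T x)‖ = Real.sqrt (‖R (T x)‖ ^ 2) := (Real.sqrt_sq (norm_nonneg _)).symm
      rw [h2]
      calc Real.sqrt (‖R (T x)‖ ^ 2) ≤ Real.sqrt (‖Ts * T‖ * ‖R x‖ ^ 2) :=
            Real.sqrt_le_sqrt h1
        _ = Real.sqrt ‖Ts * T‖ * ‖R x‖ := by
            rw [Real.sqrt_mul (norm_nonneg _), Real.sqrt_sq (norm_nonneg _)]
    have hwTbdd : BddAbove {r : ℝ | ∃ x : H, vnormA A x = 1 ∧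
        r = ‖innA A (T x) x‖} :=
      bddAbove_wA A R hRR hR T (Real.sqrt ‖Ts * T‖) hbT
    have hwT0 : 0 ≤ wA A T :=
      le_trans (norm_nonneg _) (le_csSup hwTbdd ⟨x₀, hx₀v, rfl⟩)
    -- conjugate identity
    have hconjz : ∀ x : H, @inner ℂ _ _ (A (Ts x)) x
        = (starRingEnd ℂ) (@inner ℂ _ _ (A (T x)) x) := by
      intro x
      have h1 : A (Ts x) = (star T) (A x) := by rw [← ContinuousLinearMap.mul_apply, hTs', ContinuousLinearMap.mul_apply]
      rw [h1, star_eq_adjoint, ContinuousLinearMap.adjoint_inner_left]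
      rw [← inner_conj_symm]
      congr 1
      conv_lhs => rw [← hAsa.adjoint_eq]
      rw [ContinuousLinearMap.adjoint_inner_right]
    -- value identities
    have hvalP : ∀ x : H, innA A ((P + Q) x) x
        = (((innA A (T x) x).re - (innA A (T x) x).im : ℝ) : ℂ) := by
      intro x
      have e1 : (P + Q) x = (2:ℂ)⁻¹ • (T x + Ts x)
          + ((2:ℂ) * Complex.I)⁻¹ • (T x - Ts x) := by
        simp only [hPdef, hQdef, ReA, ImA, add_apply, smul_apply, sub_apply]
      rw [innA, e1, map_add, map_smul, map_smul, inner_add_left, inner_smul_left,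
        inner_smul_left, map_add, map_sub, inner_add_left, inner_sub_left, hconjz x, cidP]
      rfl
    have hvalM : ∀ x : H, innA A ((P - Q) x) x
        = (((innA A (T x) x).re + (innA A (T x) x).im : ℝ) : ℂ) := by
      intro x
      have e1 : (P - Q) x = (2:ℂ)⁻¹ • (T x + Ts x)
          - ((2:ℂ) * Complex.I)⁻¹ • (T x - Ts x) := by
        simp only [hPdef, hQdef, ReA, ImA, sub_apply, smul_apply, add_apply]
      rw [innA, e1, map_sub, map_smul, map_smul, inner_sub_left, inner_smul_left,
        inner_smul_left, map_add, map_sub, inner_add_left, inner_sub_left, hconjz x, cidM]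
      rfl
    -- w bounds
    have hwPQ : wA A (P + Q) ≤ Real.sqrt 2 * wA A T := by
      apply Real.sSup_le _ (by positivity)
      rintro r ⟨x, hx, rfl⟩
      rw [hvalP x, Complex.norm_real, Real.norm_eq_abs]
      have h1 : |(innA A (T x) x).re - (innA A (T x) x).im|
          ≤ Real.sqrt 2 * ‖innA A (T x) x‖ := by
        rw [abs_eq_sqrt]
        exact sqrt2_sub _ _
      have h2 : ‖innA A (T x) x‖ ≤ wA A T := le_csSup hwTbdd ⟨x, hx, rfl⟩
      calc |(innA A (T x) x).re - (innA A (T x) x).im|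
          ≤ Real.sqrt 2 * ‖innA A (T x) x‖ := h1
        _ ≤ Real.sqrt 2 * wA A T := by
            apply mul_le_mul_of_nonneg_left h2 (Real.sqrt_nonneg 2)
    have hwPM : wA A (P - Q) ≤ Real.sqrt 2 * wA A T := by
      apply Real.sSup_le _ (by positivity)
      rintro r ⟨x, hx, rfl⟩
      rw [hvalM x, Complex.norm_real, Real.norm_eq_abs]
      have h1 : |(innA A (T x) x).re + (innA A (T x) x).im|
          ≤ Real.sqrt 2 * ‖innA A (T x) x‖ := by
        rw [abs_eq_sqrt]
        exact sqrt2_add _ _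
      have h2 : ‖innA A (T x) x‖ ≤ wA A T := le_csSup hwTbdd ⟨x, hx, rfl⟩
      calc |(innA A (T x) x).re + (innA A (T x) x).im|
          ≤ Real.sqrt 2 * ‖innA A (T x) x‖ := h1
        _ ≤ Real.sqrt 2 * wA A T := by
            apply mul_le_mul_of_nonneg_left h2 (Real.sqrt_nonneg 2)
    have haw : opnormA A (P + Q) ≤ wA A (P + Q) := op_le_wA A R hRR hR hAsa _ hPQ x₀ hx₀
    have hbw : opnormA A (P - Q) ≤ wA A (P - Q) := op_le_wA A R hRR hR hAsa _ hPM x₀ hx₀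
    set a := opnormA A (P + Q) with hadef
    set b := opnormA A (P - Q) with hbdef
    have ha0 : 0 ≤ a := by
      have h1 : vnormA A ((P + Q) x₀) ∈ {r : ℝ | ∃ x : H, vnormA A x = 1 ∧
          r = vnormA A ((P + Q) x)} := ⟨x₀, hx₀v, rfl⟩
      have h2 : vnormA A ((P + Q) x₀) ≤ opnormA A (P + Q) :=
        le_csSup (bddAbove_opA A R hRR hR _ hPQ) h1
      have h3 : 0 ≤ vnormA A ((P + Q) x₀) := Real.sqrt_nonneg _
      linarith
    have hb0 : 0 ≤ b := by
      have h1 : vnormA A ((P - Q) x₀) ∈ {r : ℝ | ∃ x : H, vnormA A x = 1 ∧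
          r = vnormA A ((P - Q) x)} := ⟨x₀, hx₀v, rfl⟩
      have h2 : vnormA A ((P - Q) x₀) ≤ opnormA A (P - Q) :=
        le_csSup (bddAbove_opA A R hRR hR _ hPM) h1
      have h3 : 0 ≤ vnormA A ((P - Q) x₀) := Real.sqrt_nonneg _
      linarith
    have hc : opnormA A (Ts.comp T + T.comp Ts) ≤ a ^ 2 + b ^ 2 := by
      apply Real.sSup_le _ (by positivity)
      rintro r ⟨x, hx, rfl⟩
      rw [vnormA_eq A R hRR hR] at hx ⊢
      rw [sqsum T Ts x, map_add]
      calc ‖R ((P + Q) ((P + Q) x)) + R ((P - Q) ((P - Q) x))‖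
          ≤ ‖R ((P + Q) ((P + Q) x))‖ + ‖R ((P - Q) ((P - Q) x))‖ := norm_add_le _ _
        _ ≤ a * ‖R ((P + Q) x)‖ + b * ‖R ((P - Q) x)‖ :=
            add_le_add (homA A R hRR hR _ hPQ _) (homA A R hRR hR _ hPM _)
        _ ≤ a * (a * ‖R x‖) + b * (b * ‖R x‖) :=
            add_le_add (mul_le_mul_of_nonneg_left (homA A R hRR hR _ hPQ _) ha0)
              (mul_le_mul_of_nonneg_left (homA A R hRR hR _ hPM _) hb0)
        _ = a ^ 2 + b ^ 2 := by rw [hx]; ring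
    -- final arithmetic
    have ha2 : a ^ 2 ≤ 2 * wA A T ^ 2 := by
      have h1 : a ≤ Real.sqrt 2 * wA A T := le_trans haw hwPQ
      nlinarith [Real.sq_sqrt (by norm_num : (0:ℝ) ≤ 2), Real.sqrt_nonneg 2]
    have hb2 : b ^ 2 ≤ 2 * wA A T ^ 2 := by
      have h1 : b ≤ Real.sqrt 2 * wA A T := le_trans hbw hwPM
      nlinarith [Real.sq_sqrt (by norm_num : (0:ℝ) ≤ 2), Real.sqrt_nonneg 2]
    rw [ge_iff_le, show wA A T = Real.sqrt (wA A T ^ 2) from (Real.sqrt_sq hwT0).symm]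
    apply Real.sqrt_le_sqrt
    rcases abs_cases (a ^ 2 - b ^ 2) with ⟨he, _⟩ | ⟨he, _⟩ <;> rw [he] <;> linarith
  · -- degenerate case : no A-unit vector
    have hop : ∀ S : H →L[ℂ] H, opnormA A S = 0 := by
      intro S
      rw [opnormA, show {r : ℝ | ∃ x : H, vnormA A x = 1 ∧ r = vnormA A (S x)} = ∅ by
        ext r
        simp only [Set.mem_setOf_eq, Set.mem_empty_iff_false, iff_false, not_exists]
        rintro x ⟨hx, _⟩
        exact hne ⟨x, hx⟩]
      exact Real.sSup_empty
    have hw : wA A T = 0 := by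
      rw [wA, show {r : ℝ | ∃ x : H, vnormA A x = 1 ∧
          r = ‖innA A (T x) x‖} = ∅ by
        ext r
        simp only [Set.mem_setOf_eq, Set.mem_empty_iff_false, iff_false, not_exists]
        rintro x ⟨hx, _⟩
        exact hne ⟨x, hx⟩]
      exact Real.sSup_empty
    rw [hw, hop, hop, hop]
    norm_num
end
end

section
/- Let T, X, Y be bounded linear operators on H admitting A-adjoints T♯, X♯, Y♯ respectively. Then w_A(T∘X + Y∘T) ≤ max{‖X‖_A, ‖Y‖_A} · √( 2‖T♯∘T + T∘T♯‖_A ), and the same bound holds for w_A(T∘X − Y∘T). -/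
noncomputable section

open Complex ContinuousLinearMap

variable {H : Type*} [NormedAddCommGroup H] [InnerProductSpace ℂ H] [CompleteSpace H]

set_option linter.unusedSectionVars false
set_option maxHeartbeats 1000000
set_option synthInstance.maxHeartbeats 1000000

local notation "⟪" x ", " y "⟫" => @inner ℂ _ _ x y


lemma aux_pow_limit {a c M : ℝ} (hc : 0 ≤ c)
    (h : ∀ n : ℕ, a ^ (2 ^ n) ≤ M * c ^ (2 ^ n)) : a ≤ c := by
  rcases eq_or_lt_of_le hc with h0 | h0
  · have h1 := h 0
    simp [← h0] at h1 ⊢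
    linarith
  · by_contra hlt
    push_neg at hlt
    have hr : 1 < a / c := (one_lt_div h0).2 hlt
    obtain ⟨n, hn⟩ := pow_unbounded_of_one_lt M hr
    have h1 : (a / c) ^ (2 ^ n) ≤ M := by
      rw [div_pow, div_le_iff₀ (by positivity)]
      exact h n
    have h2 : (a / c) ^ n ≤ (a / c) ^ (2 ^ n) :=
      pow_le_pow_right₀ hr.le (Nat.le_of_lt (Nat.lt_two_pow_self (n := n)))
    linarith

lemma aux_base (B R : H →L[ℂ] H) (hR : ∀ u v, ⟪B (R u), B v⟫ = ⟪B u, B (R v)⟫) (x : H) :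
    ‖B (R x)‖ ^ 2 ≤ ‖B (R (R x))‖ * ‖B x‖ := by
  have h1 : (‖B (R x)‖ : ℝ) ^ 2 = (⟪B x, B (R (R x))⟫).re := by
    rw [← hR x (R x)]
    simpa using (inner_self_eq_norm_sq (𝕜 := ℂ) (B (R x))).symm
  rw [h1]
  calc (⟪B x, B (R (R x))⟫).re ≤ ‖(⟪B x, B (R (R x))⟫ : ℂ)‖ := Complex.re_le_norm _
    _ ≤ ‖B x‖ * ‖B (R (R x))‖ := norm_inner_le_norm _ _
    _ = ‖B (R (R x))‖ * ‖B x‖ := mul_comm _ _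

lemma aux_sym_pow (B S : H →L[ℂ] H) (hS : ∀ u v, ⟪B (S u), B v⟫ = ⟪B u, B (S v)⟫) :
    ∀ n, ∀ u v, ⟪B ((S ^ n) u), B v⟫ = ⟪B u, B ((S ^ n) v)⟫ := by
  intro n
  induction n with
  | zero => simp
  | succ k ih =>
    intro u v
    have e1 : ∀ w : H, (S ^ (k+1)) w = (S ^ k) (S w) := by
      intro w; rw [pow_succ, ContinuousLinearMap.mul_apply]
    have e2 : ∀ w : H, (S ^ (k+1)) w = S ((S ^ k) w) := by
      intro w; rw [pow_succ', ContinuousLinearMap.mul_apply]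
    rw [e1 u, e2 v, ih (S u) v, hS u ((S ^ k) v)]

lemma aux_iter (B S : H →L[ℂ] H) (hS : ∀ u v, ⟪B (S u), B v⟫ = ⟪B u, B (S v)⟫) (x : H) :
    ∀ n : ℕ, ‖B (S x)‖ ^ (2 ^ n) ≤ ‖B ((S ^ (2 ^ n)) x)‖ * ‖B x‖ ^ (2 ^ n - 1) := by
  intro n
  induction n with
  | zero => simp
  | succ k ih =>
    have hpow := aux_sym_pow B S hS (2 ^ k)
    have hbase := aux_base B (S ^ (2 ^ k)) hpow x
    have step1 : ‖B (S x)‖ ^ (2 ^ (k+1)) ≤ (‖B ((S ^ 2 ^ k) x)‖ * ‖B x‖ ^ (2 ^ k - 1)) ^ 2 := by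
      have e : 2 ^ (k+1) = 2 ^ k * 2 := by ring
      rw [e, pow_mul]
      exact pow_le_pow_left₀ (by positivity) ih 2
    have e2 : (S ^ (2 ^ k)) ((S ^ (2 ^ k)) x) = (S ^ (2 ^ (k+1))) x := by
      rw [← ContinuousLinearMap.mul_apply, ← pow_add]
      congr 1
      rw [pow_succ]; ring
    have harith : 2 ^ (k+1) - 1 = 1 + 2 * (2 ^ k - 1) := by
      have : 1 ≤ 2 ^ k := Nat.one_le_two_pow
      omega
    calc ‖B (S x)‖ ^ 2 ^ (k+1)
        ≤ (‖B ((S ^ 2 ^ k) x)‖ * ‖B x‖ ^ (2 ^ k - 1)) ^ 2 := step1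
      _ = ‖B ((S ^ 2 ^ k) x)‖ ^ 2 * (‖B x‖ ^ (2 ^ k - 1)) ^ 2 := by ring
      _ ≤ (‖B ((S ^ 2 ^ (k+1)) x)‖ * ‖B x‖) * (‖B x‖ ^ (2 ^ k - 1)) ^ 2 := by
          apply mul_le_mul_of_nonneg_right _ (by positivity)
          rw [← e2]; exact hbase
      _ = ‖B ((S ^ 2 ^ (k+1)) x)‖ * ‖B x‖ ^ (2 ^ (k+1) - 1) := by
          rw [harith]; ring

lemma aux_key (B S : H →L[ℂ] H) (hS : ∀ u v, ⟪B (S u), B v⟫ = ⟪B u, B (S v)⟫) (x : H) :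
    ‖B (S x)‖ ≤ ‖S‖ * ‖B x‖ := by
  rcases eq_or_ne ‖B x‖ 0 with hbx | hbx
  · have h1 := aux_iter B S hS x 1
    rw [hbx] at h1
    norm_num at h1
    rw [hbx, mul_zero]
    simp [h1]
  · have hbx' : 0 < ‖B x‖ := lt_of_le_of_ne (norm_nonneg _) (Ne.symm hbx)
    apply aux_pow_limit (M := ‖B‖ * ‖x‖ / ‖B x‖) (by positivity)
    intro n
    have h1 := aux_iter B S hS x n
    have h2 : ‖B ((S ^ 2 ^ n) x)‖ ≤ ‖B‖ * (‖S‖ ^ 2 ^ n * ‖x‖) := by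
      calc ‖B ((S ^ 2 ^ n) x)‖ ≤ ‖B‖ * ‖(S ^ 2 ^ n) x‖ := B.le_opNorm _
        _ ≤ ‖B‖ * (‖S ^ 2 ^ n‖ * ‖x‖) :=
            mul_le_mul_of_nonneg_left ((S ^ 2 ^ n).le_opNorm x) (norm_nonneg _)
        _ ≤ ‖B‖ * (‖S‖ ^ 2 ^ n * ‖x‖) := by
            have h3 : ‖S ^ 2 ^ n‖ ≤ ‖S‖ ^ 2 ^ n := norm_pow_le' S (by positivity)
            gcongr
    have hsplit : ‖B x‖ ^ (2 ^ n - 1) = ‖B x‖ ^ (2 ^ n) / ‖B x‖ := by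
      rw [eq_div_iff hbx, ← pow_succ]
      congr 1
      have : 1 ≤ 2 ^ n := Nat.one_le_two_pow
      omega
    calc ‖B (S x)‖ ^ 2 ^ n ≤ ‖B ((S ^ 2 ^ n) x)‖ * ‖B x‖ ^ (2 ^ n - 1) := h1
      _ ≤ (‖B‖ * (‖S‖ ^ 2 ^ n * ‖x‖)) * (‖B x‖ ^ 2 ^ n / ‖B x‖) := by
          rw [hsplit]; gcongr
      _ = (‖B‖ * ‖x‖ / ‖B x‖) * (‖S‖ * ‖B x‖) ^ 2 ^ n := by
          rw [mul_pow]; field_simp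

lemma aux_adjbd (B R Rs : H →L[ℂ] H) (hR : ∀ u v, ⟪B (R u), B v⟫ = ⟪B u, B (Rs v)⟫) (x : H) :
    ‖B (R x)‖ ≤ Real.sqrt ‖Rs * R‖ * ‖B x‖ := by
  have hRs : ∀ u v, ⟪B (Rs u), B v⟫ = ⟪B u, B (R v)⟫ := by
    intro u v
    calc ⟪B (Rs u), B v⟫ = starRingEnd ℂ ⟪B v, B (Rs u)⟫ := (inner_conj_symm _ _).symm
      _ = starRingEnd ℂ ⟪B (R v), B u⟫ := by rw [hR v u]
      _ = ⟪B u, B (R v)⟫ := inner_conj_symm _ _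
  have hS : ∀ u v, ⟪B ((Rs * R) u), B v⟫ = ⟪B u, B ((Rs * R) v)⟫ := by
    intro u v
    rw [ContinuousLinearMap.mul_apply, ContinuousLinearMap.mul_apply, hRs (R u) v, hR u (R v)]
  have hkey := aux_key B (Rs * R) hS x
  have hsq : ‖B (R x)‖ ^ 2 ≤ ‖Rs * R‖ * ‖B x‖ ^ 2 := by
    have h1 : (‖B (R x)‖ : ℝ) ^ 2 = (⟪B x, B ((Rs * R) x)⟫).re := by
      rw [ContinuousLinearMap.mul_apply, ← hR x (R x)]
      simpa using (inner_self_eq_norm_sq (𝕜 := ℂ) (B (R x))).symm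
    rw [h1]
    calc (⟪B x, B ((Rs * R) x)⟫).re ≤ ‖(⟪B x, B ((Rs * R) x)⟫ : ℂ)‖ := Complex.re_le_norm _
      _ ≤ ‖B x‖ * ‖B ((Rs * R) x)‖ := norm_inner_le_norm _ _
      _ ≤ ‖B x‖ * (‖Rs * R‖ * ‖B x‖) := by gcongr
      _ = ‖Rs * R‖ * ‖B x‖ ^ 2 := by ring
  have h0 : (0:ℝ) ≤ ‖Rs * R‖ := norm_nonneg _
  have h2 : (Real.sqrt ‖Rs * R‖ * ‖B x‖) ^ 2 = ‖Rs * R‖ * ‖B x‖ ^ 2 := by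
    rw [mul_pow, Real.sq_sqrt h0]
  exact le_of_pow_le_pow_left₀ two_ne_zero (by positivity) (by rw [h2]; exact hsq)

theorem stmt13 (A T Ts X Xs Y Ys : H →L[ℂ] H) (hA : A.IsPositive)
    (hT : IsAAdjoint A T Ts) (hX : IsAAdjoint A X Xs) (hY : IsAAdjoint A Y Ys) :
    wA A (T.comp X + Y.comp T) ≤
        max (opnormA A X) (opnormA A Y) * Real.sqrt (2 * opnormA A (Ts.comp T + T.comp Ts)) ∧
      wA A (T.comp X - Y.comp T) ≤
        max (opnormA A X) (opnormA A Y) * Real.sqrt (2 * opnormA A (Ts.comp T + T.comp Ts)) := by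
  have h0 : (0:H →L[ℂ] H) ≤ A := (ContinuousLinearMap.nonneg_iff_isPositive A).2 hA
  set B := CFC.sqrt A with hBdef
  have hBB : B * B = A := CFC.sqrt_mul_sqrt_self A h0
  have hBsa : IsSelfAdjoint B := IsSelfAdjoint.of_nonneg (CFC.sqrt_nonneg A)
  have hsym : ∀ u v : H, ⟪B u, v⟫ = ⟪u, B v⟫ := fun u v =>
    (ContinuousLinearMap.isSelfAdjoint_iff_isSymmetric.mp hBsa) u v
  have hip : ∀ z w : H, innA A z w = ⟪B z, B w⟫ := by
    intro z w
    rw [innA, ← hBB, ContinuousLinearMap.mul_apply, hsym]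
  have hv : ∀ z : H, vnormA A z = ‖B z‖ := by
    intro z
    rw [vnormA, hip]
    rw [show (⟪B z, B z⟫).re = ‖B z‖ ^ 2 by
      simpa using inner_self_eq_norm_sq (𝕜 := ℂ) (B z)]
    exact Real.sqrt_sq (norm_nonneg _)
  -- adjoint relations
  have hadj : ∀ (R Rs : H →L[ℂ] H), IsAAdjoint A R Rs →
      ∀ u v, ⟪B (R u), B v⟫ = ⟪B u, B (Rs v)⟫ := by
    intro R Rs h u v
    have happ : ∀ w, A (Rs w) = (ContinuousLinearMap.adjoint R) (A w) := by
      intro w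
      have := congrArg (fun f : H →L[ℂ] H => f w) h
      simpa using this
    calc ⟪B (R u), B v⟫ = ⟪R u, B (B v)⟫ := hsym _ _
      _ = ⟪R u, A v⟫ := by rw [← ContinuousLinearMap.mul_apply B B, hBB]
      _ = ⟪u, (ContinuousLinearMap.adjoint R) (A v)⟫ :=
          (ContinuousLinearMap.adjoint_inner_right _ _ _).symm
      _ = ⟪u, A (Rs v)⟫ := by rw [← happ]
      _ = ⟪u, B (B (Rs v))⟫ := by rw [← hBB, ContinuousLinearMap.mul_apply]
      _ = ⟪B u, B (Rs v)⟫ := (hsym _ _).symm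
  have hadjT := hadj T Ts hT
  have hadjX := hadj X Xs hX
  have hadjY := hadj Y Ys hY
  have hflip : ∀ (R Rs : H →L[ℂ] H), (∀ u v, ⟪B (R u), B v⟫ = ⟪B u, B (Rs v)⟫) →
      ∀ u v, ⟪B (Rs u), B v⟫ = ⟪B u, B (R v)⟫ := by
    intro R Rs hR u v
    calc ⟪B (Rs u), B v⟫ = starRingEnd ℂ ⟪B v, B (Rs u)⟫ := (inner_conj_symm _ _).symm
      _ = starRingEnd ℂ ⟪B (R v), B u⟫ := by rw [hR v u]
      _ = ⟪B u, B (R v)⟫ := inner_conj_symm _ _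
  have hadjTs := hflip T Ts hadjT
  have hadjYs := hflip Y Ys hadjY
  -- opnormA facts
  have opA_nonneg : ∀ R : H →L[ℂ] H, 0 ≤ opnormA A R := by
    intro R
    apply Real.sSup_nonneg
    rintro r ⟨x, -, rfl⟩
    rw [hv]; exact norm_nonneg _
  have le_opA : ∀ (R : H →L[ℂ] H) (c : ℝ), (∀ z, ‖B (R z)‖ ≤ c * ‖B z‖) →
      ∀ z, ‖B (R z)‖ ≤ opnormA A R * ‖B z‖ := by
    intro R c hc z
    rcases eq_or_ne ‖B z‖ 0 with hz | hz
    · have h1 := hc z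
      rw [hz, mul_zero] at h1
      rw [hz, mul_zero]; exact h1
    · have hz' : 0 < ‖B z‖ := lt_of_le_of_ne (norm_nonneg _) (Ne.symm hz)
      set u : H := ((‖B z‖⁻¹ : ℝ) : ℂ) • z with hu
      have hBu : ‖B u‖ = 1 := by
        rw [hu, map_smul, norm_smul]
        simp [norm_inv, _root_.abs_of_nonneg (norm_nonneg (B z))]
        field_simp
      have hmem : vnormA A (R u) ∈ {r : ℝ | ∃ x : H, vnormA A x = 1 ∧ r = vnormA A (R x)} :=
        ⟨u, by rw [hv]; exact hBu, rfl⟩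
      have hbdd : BddAbove {r : ℝ | ∃ x : H, vnormA A x = 1 ∧ r = vnormA A (R x)} := by
        refine ⟨max c 0, ?_⟩
        rintro r ⟨y, hy, rfl⟩
        rw [hv] at hy ⊢
        calc ‖B (R y)‖ ≤ c * ‖B y‖ := hc y
          _ = c := by rw [hy, mul_one]
          _ ≤ max c 0 := le_max_left _ _
      have hle : vnormA A (R u) ≤ opnormA A R := le_csSup hbdd hmem
      rw [hv] at hle
      have hru : ‖B (R u)‖ = ‖B z‖⁻¹ * ‖B (R z)‖ := by
        rw [hu, map_smul, map_smul, norm_smul]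
        simp [_root_.abs_of_nonneg (norm_nonneg (B z))]
      calc ‖B (R z)‖ = ‖B z‖ * (‖B z‖⁻¹ * ‖B (R z)‖) := by field_simp
        _ = ‖B z‖ * ‖B (R u)‖ := by rw [hru]
        _ ≤ ‖B z‖ * opnormA A R := mul_le_mul_of_nonneg_left hle hz'.le
        _ = opnormA A R * ‖B z‖ := mul_comm _ _
  -- boundedness of X, Y, S
  have hbX := fun z => aux_adjbd B X Xs hadjX z
  have hbY := fun z => aux_adjbd B Y Ys hadjY z
  have hadjS : ∀ u v, ⟪B ((Ts.comp T + T.comp Ts) u), B v⟫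
      = ⟪B u, B ((Ts.comp T + T.comp Ts) v)⟫ := by
    intro u v
    simp only [ContinuousLinearMap.add_apply, ContinuousLinearMap.comp_apply, map_add,
      inner_add_left, inner_add_right]
    rw [hadjTs (T u) v, hadjT (Ts u) v, hadjT u (T v), hadjTs u (Ts v)]
  have hbS : ∀ z, ‖B ((Ts.comp T + T.comp Ts) z)‖ ≤ ‖Ts.comp T + T.comp Ts‖ * ‖B z‖ :=
    aux_key B _ hadjS
  have hXop := le_opA X _ hbX
  have hYop := le_opA Y _ hbY
  have hSop := le_opA _ _ hbS
  -- Ys bound on unit vectors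
  have hYs_bound : ∀ z, ‖B z‖ = 1 → ‖B (Ys z)‖ ≤ opnormA A Y := by
    intro z hz
    have h1 : ‖B (Ys z)‖ ^ 2 = (⟪B z, B (Y (Ys z))⟫).re := by
      rw [← hadjYs z (Ys z)]
      simpa using (inner_self_eq_norm_sq (𝕜 := ℂ) (B (Ys z))).symm
    have h4 : ‖B (Ys z)‖ ^ 2 ≤ opnormA A Y * ‖B (Ys z)‖ := by
      rw [h1]
      calc (⟪B z, B (Y (Ys z))⟫).re ≤ ‖(⟪B z, B (Y (Ys z))⟫ : ℂ)‖ := Complex.re_le_norm _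
        _ ≤ ‖B z‖ * ‖B (Y (Ys z))‖ := norm_inner_le_norm _ _
        _ = ‖B (Y (Ys z))‖ := by rw [hz, one_mul]
        _ ≤ opnormA A Y * ‖B (Ys z)‖ := hYop _
    rcases (norm_nonneg (B (Ys z))).eq_or_lt with h5 | h5
    · rw [← h5]; exact opA_nonneg Y
    · exact le_of_mul_le_mul_right (by nlinarith) h5
  have hX_unit : ∀ z, ‖B z‖ = 1 → ‖B (X z)‖ ≤ opnormA A X := by
    intro z hz
    have h1 := hXop z
    rw [hz, mul_one] at h1
    exact h1
  -- main pointwise estimate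
  set M := max (opnormA A X) (opnormA A Y) with hM
  set K := Real.sqrt (2 * opnormA A (Ts.comp T + T.comp Ts)) with hK
  have hM0 : 0 ≤ M := le_trans (opA_nonneg X) (le_max_left _ _)
  have hRHS0 : 0 ≤ M * K := mul_nonneg hM0 (Real.sqrt_nonneg _)
  have hmain : ∀ z : H, ‖B z‖ = 1 →
      ‖⟪B (T (X z)), B z⟫‖ + ‖⟪B (Y (T z)), B z⟫‖ ≤ M * K := by
    intro z hz
    have e1 : ⟪B (T (X z)), B z⟫ = ⟪B (X z), B (Ts z)⟫ := hadjT (X z) z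
    have e2 : ⟪B (Y (T z)), B z⟫ = ⟪B (T z), B (Ys z)⟫ := hadjY (T z) z
    set a := ‖B (Ts z)‖ with ha
    set b := ‖B (T z)‖ with hb
    have hab : b ^ 2 + a ^ 2 ≤ opnormA A (Ts.comp T + T.comp Ts) := by
      have h1 : (⟪B ((Ts.comp T + T.comp Ts) z), B z⟫).re = b ^ 2 + a ^ 2 := by
        simp only [ContinuousLinearMap.add_apply, ContinuousLinearMap.comp_apply, map_add,
          inner_add_left]
        rw [hadjTs (T z) z, hadjT (Ts z) z]
        have q1 : (⟪B (T z), B (T z)⟫).re = b ^ 2 := by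
          simpa using inner_self_eq_norm_sq (𝕜 := ℂ) (B (T z))
        have q2 : (⟪B (Ts z), B (Ts z)⟫).re = a ^ 2 := by
          simpa using inner_self_eq_norm_sq (𝕜 := ℂ) (B (Ts z))
        rw [Complex.add_re, q1, q2]
      have h2 : (⟪B ((Ts.comp T + T.comp Ts) z), B z⟫).re
          ≤ opnormA A (Ts.comp T + T.comp Ts) := by
        calc (⟪B ((Ts.comp T + T.comp Ts) z), B z⟫).re
            ≤ ‖(⟪B ((Ts.comp T + T.comp Ts) z), B z⟫ : ℂ)‖ := Complex.re_le_norm _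
          _ ≤ ‖B ((Ts.comp T + T.comp Ts) z)‖ * ‖B z‖ := norm_inner_le_norm _ _
          _ ≤ (opnormA A (Ts.comp T + T.comp Ts) * ‖B z‖) * ‖B z‖ :=
              mul_le_mul_of_nonneg_right (hSop z) (norm_nonneg _)
          _ = opnormA A (Ts.comp T + T.comp Ts) := by rw [hz]; ring
      linarith [h1 ▸ h2]
    have habs1 : ‖⟪B (X z), B (Ts z)⟫‖ ≤ M * a := by
      calc ‖⟪B (X z), B (Ts z)⟫‖ = ‖(⟪B (X z), B (Ts z)⟫ : ℂ)‖ := rfl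
        _ ≤ ‖B (X z)‖ * ‖B (Ts z)‖ := norm_inner_le_norm _ _
        _ ≤ M * a := by
            apply mul_le_mul_of_nonneg_right _ (norm_nonneg _)
            exact (hX_unit z hz).trans (le_max_left _ _)
    have habs2 : ‖⟪B (T z), B (Ys z)⟫‖ ≤ M * b := by
      calc ‖⟪B (T z), B (Ys z)⟫‖ = ‖(⟪B (T z), B (Ys z)⟫ : ℂ)‖ := rfl
        _ ≤ ‖B (T z)‖ * ‖B (Ys z)‖ := norm_inner_le_norm _ _
        _ ≤ b * opnormA A Y := mul_le_mul_of_nonneg_left (hYs_bound z hz) (norm_nonneg _)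
        _ ≤ b * M := mul_le_mul_of_nonneg_left (le_max_right _ _) (norm_nonneg _)
        _ = M * b := mul_comm _ _
    have h3 : a + b ≤ K := by
      have h6 : a + b = Real.sqrt ((a + b) ^ 2) := (Real.sqrt_sq (by positivity)).symm
      rw [h6, hK]
      apply Real.sqrt_le_sqrt
      nlinarith [sq_nonneg (a - b)]
    calc ‖⟪B (T (X z)), B z⟫‖ + ‖⟪B (Y (T z)), B z⟫‖
        = ‖⟪B (X z), B (Ts z)⟫‖ + ‖⟪B (T z), B (Ys z)⟫‖ := by
          rw [e1, e2]
      _ ≤ M * a + M * b := add_le_add habs1 habs2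
      _ = M * (a + b) := by ring
      _ ≤ M * K := mul_le_mul_of_nonneg_left h3 hM0
  -- conclude
  have hfinal : ∀ (W : H →L[ℂ] H),
      (∀ z, ‖B z‖ = 1 → ‖innA A (W z) z‖ ≤ M * K) → wA A W ≤ M * K := by
    intro W hW
    apply Real.sSup_le _ hRHS0
    rintro r ⟨z, hz, rfl⟩
    rw [hv] at hz
    exact hW z hz
  constructor
  · apply hfinal
    intro z hz
    have e : innA A ((T.comp X + Y.comp T) z) z
        = ⟪B (T (X z)), B z⟫ + ⟪B (Y (T z)), B z⟫ := by
      rw [hip]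
      simp [inner_add_left]
    rw [e]
    calc ‖⟪B (T (X z)), B z⟫ + ⟪B (Y (T z)), B z⟫‖
        ≤ ‖⟪B (T (X z)), B z⟫‖ + ‖⟪B (Y (T z)), B z⟫‖ :=
          norm_add_le _ _
      _ ≤ M * K := hmain z hz
  · apply hfinal
    intro z hz
    have e : innA A ((T.comp X - Y.comp T) z) z
        = ⟪B (T (X z)), B z⟫ - ⟪B (Y (T z)), B z⟫ := by
      rw [hip]
      simp [inner_sub_left]
    rw [e]
    calc ‖⟪B (T (X z)), B z⟫ - ⟪B (Y (T z)), B z⟫‖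
        ≤ ‖⟪B (T (X z)), B z⟫‖ + ‖⟪B (Y (T z)), B z⟫‖ := by
          rw [sub_eq_add_neg]
          refine (norm_add_le _ _).trans ?_
          simp
      _ ≤ M * K := hmain z hz
end
end

section
/- Let T, X, Y be bounded linear operators on H admitting A-adjoints T♯, X♯, Y♯ respectively. Then w_A(T∘X ± Y∘T) ≤ 2√2 · max{‖X‖_A, ‖Y‖_A} · √( w_A(T)² − | ‖Re_A(T)‖_A² − ‖Im_A(T)‖_A² | / 2 ), for both choices of sign. -/
noncomputable section

open Complex ContinuousLinearMap

variable {H : Type*} [NormedAddCommGroup H] [InnerProductSpace ℂ H] [CompleteSpace H]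

/-- Numeric iteration lemma. -/
lemma pow_trick {a M B : ℝ} (ha : 0 < a) (hM : 0 ≤ M) (hB : 0 ≤ B)
    {c : ℕ → ℝ} (hc : ∀ n, 0 ≤ c n)
    (hrec : ∀ n, c n ^ 2 ≤ a * c (n + 1))
    (hbd : ∀ n, c n ≤ B * M ^ (2 ^ n)) : c 0 ≤ M * a := by
  by_contra hcon
  push_neg at hcon
  have hM0 : 0 < M := by
    rcases hM.lt_or_eq with h | h
    · exact h
    · exfalso
      have h0 := hbd 0
      rw [← h] at h0
      simp at h0
      have := hc 0
      nlinarith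
  have hMa : 0 < M * a := mul_pos hM0 ha
  have key : ∀ n, c 0 ^ (2 ^ n) * a ≤ a ^ (2 ^ n) * c n := by
    intro n
    induction n with
    | zero => simp [mul_comm]
    | succ n ih =>
      have h1 : (c 0 ^ (2 ^ n) * a) ^ 2 ≤ (a ^ (2 ^ n) * c n) ^ 2 := by
        apply pow_le_pow_left₀ (mul_nonneg (pow_nonneg (hc 0) _) ha.le) ih
      have h2 : (c n) ^ 2 ≤ a * c (n + 1) := hrec n
      have e1 : (2 : ℕ) ^ (n + 1) = 2 ^ n + 2 ^ n := by ring
      rw [e1, pow_add, pow_add]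
      nlinarith [pow_nonneg ha.le (2 ^ n), pow_nonneg (hc 0) (2 ^ n), sq_nonneg (a ^ (2 ^ n)),
        pow_pos ha (2 ^ n)]
  set ρ : ℝ := c 0 / (M * a) with hρdef
  have hρ : 1 < ρ := (one_lt_div hMa).2 hcon
  obtain ⟨n, hn⟩ := pow_unbounded_of_one_lt (B / a) hρ
  have h2n : ρ ^ n ≤ ρ ^ (2 ^ n) := pow_le_pow_right₀ hρ.le (Nat.lt_two_pow_self (n := n)).le
  have hc0 : c 0 = ρ * (M * a) := by rw [hρdef, div_mul_cancel₀ _ hMa.ne']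
  have hup : c 0 ^ (2 ^ n) * a ≤ a ^ (2 ^ n) * (B * M ^ (2 ^ n)) := by
    calc c 0 ^ (2 ^ n) * a ≤ a ^ (2 ^ n) * c n := key n
    _ ≤ a ^ (2 ^ n) * (B * M ^ (2 ^ n)) := by
        apply mul_le_mul_of_nonneg_left (hbd n) (pow_nonneg ha.le _)
  rw [hc0, mul_pow, mul_pow] at hup
  -- hup : ρ^(2^n) * (M^(2^n) * a^(2^n)) * a ≤ a^(2^n) * (B * M^(2^n))
  have hfin : ρ ^ (2 ^ n) * a ≤ B := by
    have hpos : 0 < M ^ (2 ^ n) * a ^ (2 ^ n) := by positivity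
    have := hup
    rw [show ρ ^ 2 ^ n * (M ^ 2 ^ n * a ^ 2 ^ n) * a = (ρ ^ 2 ^ n * a) * (M ^ 2 ^ n * a ^ 2 ^ n) by ring,
      show a ^ 2 ^ n * (B * M ^ 2 ^ n) = B * (M ^ 2 ^ n * a ^ 2 ^ n) by ring] at this
    exact le_of_mul_le_mul_right this hpos
  have : B < ρ ^ (2 ^ n) * a := by
    rw [div_lt_iff₀ ha] at hn
    calc B < ρ ^ n * a := hn
    _ ≤ ρ ^ (2 ^ n) * a := by apply mul_le_mul_of_nonneg_right h2n ha.le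
  linarith

local notation "⟪" x ", " y "⟫" => @inner ℂ _ _ x y

lemma exists_Q (A : H →L[ℂ] H) (hA : A.IsPositive) :
    ∃ Q : H →L[ℂ] H, ∀ x y : H, innA A x y = ⟪Q x, Q y⟫ := by
  have hA' : (0 : H →L[ℂ] H) ≤ A := (nonneg_iff_isPositive A).2 hA
  refine ⟨CFC.sqrt A, fun x y => ?_⟩
  have h2 : CFC.sqrt A * CFC.sqrt A = A := CFC.sqrt_mul_sqrt_self A hA'
  have hsa : ContinuousLinearMap.adjoint (CFC.sqrt A) = CFC.sqrt A := by
    rw [← isSelfAdjoint_iff']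
    exact ((nonneg_iff_isPositive _).1 (CFC.sqrt_nonneg (a := A))).isSelfAdjoint
  have h3 := adjoint_inner_left (CFC.sqrt A) y (CFC.sqrt A x)
  rw [hsa] at h3
  unfold innA
  conv_lhs => rw [← h2]
  rw [mul_apply_eq_comp]
  exact h3

variable {A Q : H →L[ℂ] H}

lemma vnorm_eq (hQ : ∀ x y : H, innA A x y = ⟪Q x, Q y⟫) (x : H) :
    vnormA A x = ‖Q x‖ := by
  unfold vnormA
  have h1 : (innA A x x).re = ‖Q x‖ ^ 2 := by
    rw [hQ, inner_self_eq_norm_sq_to_K, ← RCLike.ofReal_pow]; rfl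
  rw [h1]
  exact Real.sqrt_sq (norm_nonneg _)

lemma adj_rel (hA : A.IsPositive) (hQ : ∀ x y : H, innA A x y = ⟪Q x, Q y⟫)
    {S Ss : H →L[ℂ] H} (h : IsAAdjoint A S Ss) (u v : H) :
    ⟪Q (S u), Q v⟫ = ⟪Q u, Q (Ss v)⟫ := by
  have hAsa : ContinuousLinearMap.adjoint A = A := isSelfAdjoint_iff'.1 hA.isSelfAdjoint
  have h2 : A.comp S = (ContinuousLinearMap.adjoint Ss).comp A := by
    have h3 := congrArg ContinuousLinearMap.adjoint h
    rw [adjoint_comp, adjoint_comp, adjoint_adjoint, hAsa] at h3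
    exact h3.symm
  have e1 : (⟪Q (S u), Q v⟫ : ℂ) = ⟪A (S u), v⟫ := (hQ _ _).symm
  have e2 : A (S u) = (ContinuousLinearMap.adjoint Ss) (A u) := by
    have h4 := congrFun (congrArg DFunLike.coe h2) u
    simpa using h4
  rw [e1, e2, adjoint_inner_left]
  exact hQ u (Ss v)

lemma adj_rel_symm {S Ss : H →L[ℂ] H}
    (hadj : ∀ u v : H, ⟪Q (S u), Q v⟫ = ⟪Q u, Q (Ss v)⟫) (u v : H) :
    ⟪Q (Ss u), Q v⟫ = ⟪Q u, Q (S v)⟫ := by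
  rw [← inner_conj_symm (Q (Ss u)) (Q v), ← hadj v u, inner_conj_symm]

lemma sym_bound {P : H →L[ℂ] H}
    (hsym : ∀ u v : H, ⟪Q (P u), Q v⟫ = ⟪Q u, Q (P v)⟫) (x : H) :
    ‖Q (P x)‖ ≤ ‖P‖ * ‖Q x‖ := by
  have hpow : ∀ (k : ℕ) (u v : H), ⟪Q ((P ^ k) u), Q v⟫ = ⟪Q u, Q ((P ^ k) v)⟫ := by
    intro k
    induction k with
    | zero => intro u v; simp
    | succ k ih =>
      intro u v
      have e1 : (P ^ (k + 1)) u = (P ^ k) (P u) := by rw [pow_succ, mul_apply_eq_comp]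
      have e2 : (P ^ (k + 1)) v = P ((P ^ k) v) := by rw [pow_succ', mul_apply_eq_comp]
      rw [e1, e2, ih (P u) v, hsym u ((P ^ k) v)]
  have hrec0 : ∀ (k : ℕ) (z : H),
      ‖Q ((P ^ k) z)‖ ^ 2 ≤ ‖Q z‖ * ‖Q ((P ^ (k + k)) z)‖ := by
    intro k z
    have e3 : (⟪Q ((P ^ k) z), Q ((P ^ k) z)⟫ : ℂ) = ⟪Q z, Q ((P ^ (k + k)) z)⟫ := by
      rw [hpow k z ((P ^ k) z), pow_add, mul_apply_eq_comp]
    have e4 : ‖Q ((P ^ k) z)‖ ^ 2 = (⟪Q z, Q ((P ^ (k + k)) z)⟫ : ℂ).re := by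
      rw [← e3, inner_self_eq_norm_sq_to_K, ← RCLike.ofReal_pow]; rfl
    rw [e4]
    calc (⟪Q z, Q ((P ^ (k + k)) z)⟫ : ℂ).re ≤ ‖(⟪Q z, Q ((P ^ (k + k)) z)⟫ : ℂ)‖ :=
          Complex.re_le_norm _
    _ = ‖(⟪Q z, Q ((P ^ (k + k)) z)⟫ : ℂ)‖ := rfl
    _ ≤ ‖Q z‖ * ‖Q ((P ^ (k + k)) z)‖ := norm_inner_le_norm _ _
  rcases eq_or_lt_of_le (norm_nonneg (Q x)) with h0 | h0
  · have h1 : ‖Q (P x)‖ ^ 2 ≤ 0 := by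
      have h5 := hrec0 1 x
      rw [pow_one, ← h0, zero_mul] at h5
      exact h5
    have h6 : ‖Q (P x)‖ = 0 := by nlinarith [norm_nonneg (Q (P x))]
    rw [h6, ← h0, mul_zero]
  · have key := pow_trick h0 (norm_nonneg P) (mul_nonneg (norm_nonneg Q) (norm_nonneg x))
      (c := fun n => ‖Q ((P ^ (2 ^ n)) x)‖) (fun n => norm_nonneg _)
      (fun n => by
        have h7 := hrec0 (2 ^ n) x
        have e5 : (2 : ℕ) ^ n + 2 ^ n = 2 ^ (n + 1) := by ring
        rw [e5] at h7
        exact h7)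
      (fun n => by
        calc ‖Q ((P ^ (2 ^ n)) x)‖ ≤ ‖Q‖ * ‖(P ^ (2 ^ n)) x‖ := le_opNorm _ _
        _ ≤ ‖Q‖ * (‖P ^ (2 ^ n)‖ * ‖x‖) := by
            apply mul_le_mul_of_nonneg_left (le_opNorm _ _) (norm_nonneg _)
        _ ≤ ‖Q‖ * (‖P‖ ^ (2 ^ n) * ‖x‖) := by
            have h8 := norm_pow_le' P (pow_pos two_pos n)
            exact mul_le_mul_of_nonneg_left
              (mul_le_mul_of_nonneg_right h8 (norm_nonneg x)) (norm_nonneg Q)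
        _ = ‖Q‖ * ‖x‖ * ‖P‖ ^ (2 ^ n) := by ring)
    simpa using key

lemma sq_bound {S Ss : H →L[ℂ] H} (hQ : ∀ x y : H, innA A x y = ⟪Q x, Q y⟫)
    (hadj : ∀ u v : H, ⟪Q (S u), Q v⟫ = ⟪Q u, Q (Ss v)⟫) (x : H) :
    ‖Q (S x)‖ ^ 2 ≤ ‖Ss * S‖ * ‖Q x‖ ^ 2 := by
  have hsymP : ∀ u v : H, ⟪Q ((Ss * S) u), Q v⟫ = ⟪Q u, Q ((Ss * S) v)⟫ := by
    intro u v
    rw [mul_apply_eq_comp, adj_rel_symm hadj (S u) v, hadj u (S v), mul_apply_eq_comp]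
  have e4 : ‖Q (S x)‖ ^ 2 = (⟪Q x, Q (Ss (S x))⟫ : ℂ).re := by
    rw [← hadj x (S x), inner_self_eq_norm_sq_to_K, ← RCLike.ofReal_pow]; rfl
  have e5 : (⟪Q x, Q (Ss (S x))⟫ : ℂ).re ≤ ‖Q x‖ * ‖Q ((Ss * S) x)‖ := by
    calc (⟪Q x, Q (Ss (S x))⟫ : ℂ).re ≤ ‖(⟪Q x, Q (Ss (S x))⟫ : ℂ)‖ := Complex.re_le_norm _
    _ = ‖(⟪Q x, Q (Ss (S x))⟫ : ℂ)‖ := rfl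
    _ ≤ ‖Q x‖ * ‖Q (Ss (S x))‖ := norm_inner_le_norm _ _
    _ = ‖Q x‖ * ‖Q ((Ss * S) x)‖ := by rw [mul_apply_eq_comp]
  have e6 : ‖Q ((Ss * S) x)‖ ≤ ‖Ss * S‖ * ‖Q x‖ := sym_bound hsymP x
  calc ‖Q (S x)‖ ^ 2 = (⟪Q x, Q (Ss (S x))⟫ : ℂ).re := e4
  _ ≤ ‖Q x‖ * ‖Q ((Ss * S) x)‖ := e5
  _ ≤ ‖Q x‖ * (‖Ss * S‖ * ‖Q x‖) :=
      mul_le_mul_of_nonneg_left e6 (norm_nonneg _)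
  _ = ‖Ss * S‖ * ‖Q x‖ ^ 2 := by ring

lemma opnorm_nonneg (A S : H →L[ℂ] H) : 0 ≤ opnormA A S := by
  apply Real.sSup_nonneg
  rintro r ⟨x, hx, rfl⟩
  exact Real.sqrt_nonneg _

lemma wA_nonneg (A T : H →L[ℂ] H) : 0 ≤ wA A T := by
  apply Real.sSup_nonneg
  rintro r ⟨x, hx, rfl⟩
  exact norm_nonneg _

lemma opnorm_bdd {S Ss : H →L[ℂ] H} (hQ : ∀ x y : H, innA A x y = ⟪Q x, Q y⟫)
    (hadj : ∀ u v : H, ⟪Q (S u), Q v⟫ = ⟪Q u, Q (Ss v)⟫) :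
    BddAbove {r : ℝ | ∃ x : H, vnormA A x = 1 ∧ r = vnormA A (S x)} := by
  refine ⟨Real.sqrt ‖Ss * S‖, ?_⟩
  rintro r ⟨x, hx, rfl⟩
  rw [vnorm_eq hQ] at hx ⊢
  rw [Real.le_sqrt (by positivity) (norm_nonneg _)]
  have := sq_bound hQ hadj x
  rw [hx] at this
  simpa using this

lemma unit_scale (hQ : ∀ x y : H, innA A x y = ⟪Q x, Q y⟫) {x : H} (hx : ‖Q x‖ ≠ 0) :
    vnormA A ((((‖Q x‖)⁻¹ : ℝ) : ℂ) • x) = 1 := by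
  rw [vnorm_eq hQ, map_smul, norm_smul]
  simp only [Complex.norm_real, Real.norm_eq_abs]
  rw [_root_.abs_of_nonneg (inv_nonneg.mpr (norm_nonneg _)), inv_mul_cancel₀ hx]

lemma per_vec {S Ss : H →L[ℂ] H} (hQ : ∀ x y : H, innA A x y = ⟪Q x, Q y⟫)
    (hadj : ∀ u v : H, ⟪Q (S u), Q v⟫ = ⟪Q u, Q (Ss v)⟫) (x : H) :
    ‖Q (S x)‖ ≤ opnormA A S * ‖Q x‖ := by
  by_cases hx : ‖Q x‖ = 0
  · have h1 := sq_bound hQ hadj x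
    rw [hx] at h1
    simp only [ne_eq, OfNat.ofNat_ne_zero, not_false_eq_true, zero_pow, mul_zero] at h1
    have h2 : ‖Q (S x)‖ = 0 := by nlinarith [norm_nonneg (Q (S x))]
    rw [h2, hx, mul_zero]
  · set y : H := (((‖Q x‖)⁻¹ : ℝ) : ℂ) • x with hy
    have hmem : vnormA A (S y) ∈ {r : ℝ | ∃ z : H, vnormA A z = 1 ∧ r = vnormA A (S z)} :=
      ⟨y, unit_scale hQ hx, rfl⟩
    have hle : vnormA A (S y) ≤ opnormA A S := le_csSup (opnorm_bdd hQ hadj) hmem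
    have he : vnormA A (S y) = (‖Q x‖)⁻¹ * ‖Q (S x)‖ := by
      rw [vnorm_eq hQ, hy, map_smul, map_smul, norm_smul]
      simp only [Complex.norm_real, Real.norm_eq_abs]
      rw [_root_.abs_of_nonneg (inv_nonneg.mpr (norm_nonneg _))]
    rw [he] at hle
    have := mul_le_mul_of_nonneg_left hle (norm_nonneg (Q x))
    calc ‖Q (S x)‖ = ‖Q x‖ * ((‖Q x‖)⁻¹ * ‖Q (S x)‖) := by field_simp
    _ ≤ ‖Q x‖ * opnormA A S := this
    _ = opnormA A S * ‖Q x‖ := mul_comm _ _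

lemma per_vec_adj {S Ss : H →L[ℂ] H} (hQ : ∀ x y : H, innA A x y = ⟪Q x, Q y⟫)
    (hadj : ∀ u v : H, ⟪Q (S u), Q v⟫ = ⟪Q u, Q (Ss v)⟫) (x : H) :
    ‖Q (Ss x)‖ ≤ opnormA A S * ‖Q x‖ := by
  have e1 : ‖Q (Ss x)‖ ^ 2 = (⟪Q x, Q (S (Ss x))⟫ : ℂ).re := by
    rw [← adj_rel_symm hadj x (Ss x)]
    rw [inner_self_eq_norm_sq_to_K, ← RCLike.ofReal_pow]; rfl
  have e2 : (⟪Q x, Q (S (Ss x))⟫ : ℂ).re ≤ ‖Q x‖ * (opnormA A S * ‖Q (Ss x)‖) := by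
    calc (⟪Q x, Q (S (Ss x))⟫ : ℂ).re ≤ ‖(⟪Q x, Q (S (Ss x))⟫ : ℂ)‖ := by
          exact Complex.re_le_norm _
    _ ≤ ‖Q x‖ * ‖Q (S (Ss x))‖ := norm_inner_le_norm _ _
    _ ≤ ‖Q x‖ * (opnormA A S * ‖Q (Ss x)‖) :=
        mul_le_mul_of_nonneg_left (per_vec hQ hadj (Ss x)) (norm_nonneg _)
  by_cases h0 : ‖Q (Ss x)‖ = 0
  · rw [h0]
    exact mul_nonneg (opnorm_nonneg A S) (norm_nonneg _)
  · have hpos : 0 < ‖Q (Ss x)‖ := lt_of_le_of_ne (norm_nonneg _) (Ne.symm h0)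
    nlinarith [e1, e2]

lemma wA_bdd {T Ts : H →L[ℂ] H} (hQ : ∀ x y : H, innA A x y = ⟪Q x, Q y⟫)
    (hadj : ∀ u v : H, ⟪Q (T u), Q v⟫ = ⟪Q u, Q (Ts v)⟫) :
    BddAbove {r : ℝ | ∃ x : H, vnormA A x = 1 ∧ r = ‖innA A (T x) x‖} := by
  refine ⟨opnormA A T, ?_⟩
  rintro r ⟨x, hx, rfl⟩
  rw [vnorm_eq hQ] at hx
  rw [hQ]
  calc ‖(⟪Q (T x), Q x⟫ : ℂ)‖ ≤ ‖Q (T x)‖ * ‖Q x‖ := norm_inner_le_norm _ _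
  _ = ‖Q (T x)‖ := by rw [hx, mul_one]
  _ ≤ opnormA A T * ‖Q x‖ := per_vec hQ hadj x
  _ = opnormA A T := by rw [hx, mul_one]

lemma wA_per {T Ts : H →L[ℂ] H} (hQ : ∀ x y : H, innA A x y = ⟪Q x, Q y⟫)
    (hadj : ∀ u v : H, ⟪Q (T u), Q v⟫ = ⟪Q u, Q (Ts v)⟫) (z : H) :
    ‖innA A (T z) z‖ ≤ wA A T * ‖Q z‖ ^ 2 := by
  by_cases hz : ‖Q z‖ = 0
  · rw [hz]
    have : ‖innA A (T z) z‖ ≤ 0 := by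
      rw [hQ]
      calc ‖(⟪Q (T z), Q z⟫ : ℂ)‖ ≤ ‖Q (T z)‖ * ‖Q z‖ := norm_inner_le_norm _ _
      _ = 0 := by rw [hz, mul_zero]
    simpa using this
  · set c : ℝ := (‖Q z‖)⁻¹ with hc
    set y : H := ((c : ℝ) : ℂ) • z with hy
    have hyu : vnormA A y = 1 := unit_scale hQ hz
    have hmem : ‖innA A (T y) y‖ ∈
        {r : ℝ | ∃ x : H, vnormA A x = 1 ∧ r = ‖innA A (T x) x‖} := ⟨y, hyu, rfl⟩
    have hle : ‖innA A (T y) y‖ ≤ wA A T := le_csSup (wA_bdd hQ hadj) hmem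
    have he : ‖innA A (T y) y‖ = c ^ 2 * ‖innA A (T z) z‖ := by
      have e1 : innA A (T y) y = (starRingEnd ℂ ((c : ℂ))) * ((c : ℂ) * innA A (T z) z) := by
        rw [hy]
        unfold innA
        rw [map_smul, map_smul, inner_smul_left, inner_smul_right]
      rw [e1]
      simp only [norm_mul, Complex.norm_conj, Complex.norm_real, Real.norm_eq_abs]
      rw [_root_.abs_of_nonneg (by positivity : (0:ℝ) ≤ c)]
      ring
    rw [he] at hle
    have hc2 : c ^ 2 * ‖Q z‖ ^ 2 = 1 := by
      rw [hc]
      field_simp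
    have := mul_le_mul_of_nonneg_left hle (by positivity : (0:ℝ) ≤ ‖Q z‖ ^ 2)
    calc ‖innA A (T z) z‖
        = ‖Q z‖ ^ 2 * (c ^ 2 * ‖innA A (T z) z‖) := by
          rw [← mul_assoc, mul_comm (‖Q z‖ ^ 2) (c ^ 2), hc2, one_mul]
    _ ≤ ‖Q z‖ ^ 2 * wA A T := this
    _ = wA A T * ‖Q z‖ ^ 2 := mul_comm _ _

lemma polar {R : H →L[ℂ] H}
    (hsym : ∀ u v : H, ⟪Q (R u), Q v⟫ = ⟪Q u, Q (R v)⟫)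
    {w : ℝ} (hw : 0 ≤ w) (hq : ∀ z : H, |(⟪Q (R z), Q z⟫ : ℂ).re| ≤ w * ‖Q z‖ ^ 2)
    {x : H} (hx : ‖Q x‖ = 1) : ‖Q (R x)‖ ≤ w := by
  have key : ∀ u v : H, (⟪Q (R u), Q v⟫ : ℂ).re ≤ w / 2 * (‖Q u‖ ^ 2 + ‖Q v‖ ^ 2) := by
    intro u v
    have hconj : (⟪Q (R v), Q u⟫ : ℂ).re = (⟪Q (R u), Q v⟫ : ℂ).re := by
      rw [hsym v u, ← inner_conj_symm]
      exact Complex.conj_re _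
    have eplus : (⟪Q (R (u + v)), Q (u + v)⟫ : ℂ) =
        ⟪Q (R u), Q u⟫ + ⟪Q (R u), Q v⟫ + ⟪Q (R v), Q u⟫ + ⟪Q (R v), Q v⟫ := by
      simp only [map_add, inner_add_left, inner_add_right]
      ring
    have eminus : (⟪Q (R (u - v)), Q (u - v)⟫ : ℂ) =
        ⟪Q (R u), Q u⟫ - ⟪Q (R u), Q v⟫ - ⟪Q (R v), Q u⟫ + ⟪Q (R v), Q v⟫ := by
      simp only [map_sub, inner_sub_left, inner_sub_right]
      ring
    have hre : 4 * (⟪Q (R u), Q v⟫ : ℂ).re =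
        (⟪Q (R (u + v)), Q (u + v)⟫ : ℂ).re - (⟪Q (R (u - v)), Q (u - v)⟫ : ℂ).re := by
      rw [eplus, eminus]
      simp only [Complex.add_re, Complex.sub_re]
      rw [hconj]
      ring
    have hpar : ‖Q (u + v)‖ ^ 2 + ‖Q (u - v)‖ ^ 2 = 2 * (‖Q u‖ ^ 2 + ‖Q v‖ ^ 2) := by
      have := parallelogram_law_with_norm ℂ (Q u) (Q v)
      rw [map_add, map_sub]
      nlinarith [this]
    have h1 := hq (u + v)
    have h2 := hq (u - v)
    have h3 : (⟪Q (R (u + v)), Q (u + v)⟫ : ℂ).re ≤ w * ‖Q (u + v)‖ ^ 2 :=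
      le_trans (le_abs_self _) h1
    have h4 : -(⟪Q (R (u - v)), Q (u - v)⟫ : ℂ).re ≤ w * ‖Q (u - v)‖ ^ 2 :=
      le_trans (neg_le_abs _) h2
    nlinarith [hre, hpar, h3, h4]
  by_cases h0 : ‖Q (R x)‖ = 0
  · rw [h0]; exact hw
  · set c : ℝ := (‖Q (R x)‖)⁻¹ with hc
    set v : H := ((c : ℝ) : ℂ) • R x with hv
    have hvu : ‖Q v‖ = 1 := by
      rw [hv, map_smul, norm_smul]
      simp only [Complex.norm_real, Real.norm_eq_abs]
      rw [_root_.abs_of_nonneg (by positivity : (0:ℝ) ≤ c), hc, inv_mul_cancel₀ h0]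
    have hre : (⟪Q (R x), Q v⟫ : ℂ).re = ‖Q (R x)‖ := by
      rw [hv, map_smul, inner_smul_right]
      have : (⟪Q (R x), Q (R x)⟫ : ℂ) = ((‖Q (R x)‖ ^ 2 : ℝ) : ℂ) := by
        rw [inner_self_eq_norm_sq_to_K]
        norm_cast
      rw [this]
      rw [← Complex.ofReal_mul]
      rw [Complex.ofReal_re]
      rw [hc]
      field_simp
    have := key x v
    rw [hre, hx, hvu] at this
    calc ‖Q (R x)‖ ≤ w / 2 * (1 ^ 2 + 1 ^ 2) := this
    _ = w := by ring

lemma ReA_sym {T Ts : H →L[ℂ] H}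
    (hadj : ∀ u v : H, ⟪Q (T u), Q v⟫ = ⟪Q u, Q (Ts v)⟫) (u v : H) :
    ⟪Q (ReA T Ts u), Q v⟫ = ⟪Q u, Q (ReA T Ts v)⟫ := by
  have h1 := adj_rel_symm hadj
  simp only [ReA, smul_apply, add_apply, map_smul, map_add, inner_smul_left, inner_smul_right,
    inner_add_left, inner_add_right, hadj, h1]
  simp only [map_inv₀, Complex.conj_ofNat]
  ring

lemma ImA_sym {T Ts : H →L[ℂ] H}
    (hadj : ∀ u v : H, ⟪Q (T u), Q v⟫ = ⟪Q u, Q (Ts v)⟫) (u v : H) :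
    ⟪Q (ImA T Ts u), Q v⟫ = ⟪Q u, Q (ImA T Ts v)⟫ := by
  have h1 := adj_rel_symm hadj
  simp only [ImA, smul_apply, sub_apply, map_smul, map_sub, inner_smul_left, inner_smul_right,
    inner_sub_left, inner_sub_right, hadj, h1]
  rw [Complex.conj_inv]
  simp only [map_mul, Complex.conj_I, Complex.conj_ofNat]
  have h2 : ((2 : ℂ) * (-Complex.I))⁻¹ = -(2 * Complex.I)⁻¹ := by
    rw [mul_neg, ← neg_inv]
  rw [h2]
  ring

lemma ReA_q {T Ts : H →L[ℂ] H}
    (hadj : ∀ u v : H, ⟪Q (T u), Q v⟫ = ⟪Q u, Q (Ts v)⟫) (z : H) :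
    (⟪Q (ReA T Ts z), Q z⟫ : ℂ).re = (⟪Q (T z), Q z⟫ : ℂ).re := by
  have h1 := adj_rel_symm hadj
  have e1 : (⟪Q (ReA T Ts z), Q z⟫ : ℂ) =
      (starRingEnd ℂ) (2 : ℂ)⁻¹ * (⟪Q (T z), Q z⟫ + ⟪Q (Ts z), Q z⟫) := by
    simp only [ReA, smul_apply, add_apply, map_smul, map_add, inner_smul_left, inner_add_left]
  have e2 : (⟪Q (Ts z), Q z⟫ : ℂ) = (starRingEnd ℂ) ⟪Q (T z), Q z⟫ := by
    rw [h1 z z, ← inner_conj_symm]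
  rw [e1, e2, Complex.add_conj]
  have h5 : (starRingEnd ℂ) (2:ℂ)⁻¹ * (((2 * (⟪Q (T z), Q z⟫ : ℂ).re : ℝ)) : ℂ) =
      (((⟪Q (T z), Q z⟫ : ℂ).re : ℝ) : ℂ) := by
    rw [map_inv₀, Complex.conj_ofNat]
    push_cast
    ring
  rw [h5, Complex.ofReal_re]

lemma ImA_q {T Ts : H →L[ℂ] H}
    (hadj : ∀ u v : H, ⟪Q (T u), Q v⟫ = ⟪Q u, Q (Ts v)⟫) (z : H) :
    (⟪Q (ImA T Ts z), Q z⟫ : ℂ).re = -(⟪Q (T z), Q z⟫ : ℂ).im := by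
  have h1 := adj_rel_symm hadj
  have e1 : (⟪Q (ImA T Ts z), Q z⟫ : ℂ) =
      (starRingEnd ℂ) (2 * Complex.I)⁻¹ * (⟪Q (T z), Q z⟫ - ⟪Q (Ts z), Q z⟫) := by
    simp only [ImA, smul_apply, sub_apply, map_smul, map_sub, inner_smul_left, inner_sub_left]
  have e2 : (⟪Q (Ts z), Q z⟫ : ℂ) = (starRingEnd ℂ) ⟪Q (T z), Q z⟫ := by
    rw [h1 z z, ← inner_conj_symm]
  rw [e1, e2, Complex.sub_conj]
  have h5 : (starRingEnd ℂ) (2 * Complex.I)⁻¹ *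
      (((2 * (⟪Q (T z), Q z⟫ : ℂ).im : ℝ) : ℂ) * Complex.I) =
      ((-(⟪Q (T z), Q z⟫ : ℂ).im : ℝ) : ℂ) := by
    rw [map_inv₀, map_mul, Complex.conj_ofNat, Complex.conj_I]
    push_cast
    rw [mul_neg, inv_neg, mul_inv, Complex.inv_I]
    linear_combination ((⟪Q (T z), Q z⟫ : ℂ).im : ℂ) * Complex.I_sq
  rw [h5, Complex.ofReal_re]

lemma decompT {T Ts : H →L[ℂ] H} (x : H) :
    T x = ReA T Ts x + Complex.I • ImA T Ts x ∧
    Ts x = ReA T Ts x - Complex.I • ImA T Ts x := by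
  have hcoef : Complex.I * (2 * Complex.I)⁻¹ = 2⁻¹ := by
    rw [mul_inv, Complex.inv_I]
    calc Complex.I * (2⁻¹ * -Complex.I) = -(2⁻¹) * (Complex.I * Complex.I) := by ring
    _ = 2⁻¹ := by rw [Complex.I_mul_I]; ring
  constructor
  · simp only [ReA, ImA, smul_apply, add_apply, sub_apply, smul_smul, hcoef]
    rw [smul_add, smul_sub]
    module
  · simp only [ReA, ImA, smul_apply, add_apply, sub_apply, smul_smul, hcoef]
    rw [smul_add, smul_sub]
    module

lemma opRe_le_w {T Ts : H →L[ℂ] H} (hQ : ∀ x y : H, innA A x y = ⟪Q x, Q y⟫)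
    (hadj : ∀ u v : H, ⟪Q (T u), Q v⟫ = ⟪Q u, Q (Ts v)⟫) :
    opnormA A (ReA T Ts) ≤ wA A T := by
  apply Real.sSup_le _ (wA_nonneg A T)
  rintro r ⟨x, hx, rfl⟩
  rw [vnorm_eq hQ] at hx ⊢
  apply polar (ReA_sym hadj) (wA_nonneg A T) _ hx
  intro z
  rw [ReA_q hadj]
  calc |(⟪Q (T z), Q z⟫ : ℂ).re| ≤ ‖(⟪Q (T z), Q z⟫ : ℂ)‖ := Complex.abs_re_le_norm _
  _ = ‖innA A (T z) z‖ := by rw [hQ]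
  _ ≤ wA A T * ‖Q z‖ ^ 2 := wA_per hQ hadj z

lemma opIm_le_w {T Ts : H →L[ℂ] H} (hQ : ∀ x y : H, innA A x y = ⟪Q x, Q y⟫)
    (hadj : ∀ u v : H, ⟪Q (T u), Q v⟫ = ⟪Q u, Q (Ts v)⟫) :
    opnormA A (ImA T Ts) ≤ wA A T := by
  apply Real.sSup_le _ (wA_nonneg A T)
  rintro r ⟨x, hx, rfl⟩
  rw [vnorm_eq hQ] at hx ⊢
  apply polar (ImA_sym hadj) (wA_nonneg A T) _ hx
  intro z
  rw [ImA_q hadj]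
  rw [abs_neg]
  calc |(⟪Q (T z), Q z⟫ : ℂ).im| ≤ ‖(⟪Q (T z), Q z⟫ : ℂ)‖ := Complex.abs_im_le_norm _
  _ = ‖innA A (T z) z‖ := by rw [hQ]
  _ ≤ wA A T * ‖Q z‖ ^ 2 := wA_per hQ hadj z

set_option maxHeartbeats 1000000 in
lemma elem_bound (hA : A.IsPositive) (hQ : ∀ x y : H, innA A x y = ⟪Q x, Q y⟫)
    {T Ts X Xs Y Ys : H →L[ℂ] H}
    (hT : IsAAdjoint A T Ts) (hX : IsAAdjoint A X Xs) (hY : IsAAdjoint A Y Ys)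
    {x : H} (hx : ‖Q x‖ = 1) :
    ‖(⟪Q (T (X x)), Q x⟫ : ℂ)‖ + ‖(⟪Q (Y (T x)), Q x⟫ : ℂ)‖ ≤
      2 * Real.sqrt 2 * max (opnormA A X) (opnormA A Y) *
        Real.sqrt (wA A T ^ 2 - |opnormA A (ReA T Ts) ^ 2 - opnormA A (ImA T Ts) ^ 2| / 2) := by
  have hadjT := adj_rel hA hQ hT
  have hadjX := adj_rel hA hQ hX
  have hadjY := adj_rel hA hQ hY
  set M := max (opnormA A X) (opnormA A Y) with hM
  set oR := opnormA A (ReA T Ts) with hoR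
  set oI := opnormA A (ImA T Ts) with hoI
  set w := wA A T with hw
  set E := w ^ 2 - |oR ^ 2 - oI ^ 2| / 2 with hE
  set s := ‖Q (Ts x)‖ with hs
  set t := ‖Q (T x)‖ with ht
  set p := ‖Q (ReA T Ts x)‖ with hp'
  set q := ‖Q (ImA T Ts x)‖ with hq''
  have h1 : ‖(⟪Q (T (X x)), Q x⟫ : ℂ)‖ ≤ M * s := by
    rw [hadjT (X x) x]
    calc ‖(⟪Q (X x), Q (Ts x)⟫ : ℂ)‖ ≤ ‖Q (X x)‖ * ‖Q (Ts x)‖ := norm_inner_le_norm _ _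
    _ ≤ (opnormA A X * ‖Q x‖) * s :=
        mul_le_mul_of_nonneg_right (per_vec hQ hadjX x) (norm_nonneg _)
    _ = opnormA A X * s := by rw [hx, mul_one]
    _ ≤ M * s := mul_le_mul_of_nonneg_right (le_max_left _ _) (norm_nonneg _)
  have h2 : ‖(⟪Q (Y (T x)), Q x⟫ : ℂ)‖ ≤ M * t := by
    rw [hadjY (T x) x]
    calc ‖(⟪Q (T x), Q (Ys x)⟫ : ℂ)‖ ≤ ‖Q (T x)‖ * ‖Q (Ys x)‖ := norm_inner_le_norm _ _
    _ ≤ t * (opnormA A Y * ‖Q x‖) :=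
        mul_le_mul_of_nonneg_left (per_vec_adj hQ hadjY x) (norm_nonneg _)
    _ = opnormA A Y * t := by rw [hx]; ring
    _ ≤ M * t := mul_le_mul_of_nonneg_right (le_max_right _ _) (norm_nonneg _)
  have hdec := decompT (T := T) (Ts := Ts) x
  have hpar : t ^ 2 + s ^ 2 = 2 * (p ^ 2 + q ^ 2) := by
    have hplus : Q (T x) = Q (ReA T Ts x) + Complex.I • Q (ImA T Ts x) := by
      rw [hdec.1, map_add, map_smul]
    have hminus : Q (Ts x) = Q (ReA T Ts x) - Complex.I • Q (ImA T Ts x) := by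
      rw [hdec.2, map_sub, map_smul]
    have hpl := parallelogram_law_with_norm ℂ (Q (ReA T Ts x)) (Complex.I • Q (ImA T Ts x))
    have hnI : ‖Complex.I • Q (ImA T Ts x)‖ = q := by
      rw [norm_smul, Complex.norm_I, one_mul]
    rw [hnI] at hpl
    rw [ht, hs, hplus, hminus]
    nlinarith [hpl]
  have hpR : p ≤ oR := by
    have hmem : vnormA A (ReA T Ts x) ∈
        {r : ℝ | ∃ z : H, vnormA A z = 1 ∧ r = vnormA A (ReA T Ts z)} :=
      ⟨x, by rw [vnorm_eq hQ]; exact hx, rfl⟩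
    have h3 := le_csSup (opnorm_bdd hQ (ReA_sym hadjT)) hmem
    rw [vnorm_eq hQ] at h3
    exact h3
  have hqI : q ≤ oI := by
    have hmem : vnormA A (ImA T Ts x) ∈
        {r : ℝ | ∃ z : H, vnormA A z = 1 ∧ r = vnormA A (ImA T Ts z)} :=
      ⟨x, by rw [vnorm_eq hQ]; exact hx, rfl⟩
    have h3 := le_csSup (opnorm_bdd hQ (ImA_sym hadjT)) hmem
    rw [vnorm_eq hQ] at h3
    exact h3
  have hoRw : oR ≤ w := opRe_le_w hQ hadjT
  have hoIw : oI ≤ w := opIm_le_w hQ hadjT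
  have hoR0 : 0 ≤ oR := opnorm_nonneg _ _
  have hoI0 : 0 ≤ oI := opnorm_nonneg _ _
  have hE2 : oR ^ 2 + oI ^ 2 ≤ 2 * E := by
    rw [hE]
    rcases le_total oI oR with h | h
    · rw [_root_.abs_of_nonneg (by nlinarith : (0:ℝ) ≤ oR ^ 2 - oI ^ 2)]
      nlinarith [pow_le_pow_left₀ hoR0 hoRw 2]
    · rw [_root_.abs_of_nonpos (by nlinarith : oR ^ 2 - oI ^ 2 ≤ 0)]
      nlinarith [pow_le_pow_left₀ hoI0 hoIw 2]
  have hE0 : 0 ≤ E := by nlinarith [sq_nonneg oR, sq_nonneg oI]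
  have hst : (s + t) ^ 2 ≤ 8 * E := by
    nlinarith [hpar, hE2, sq_nonneg (s - t),
      pow_le_pow_left₀ (norm_nonneg (Q (ReA T Ts x))) hpR 2,
      pow_le_pow_left₀ (norm_nonneg (Q (ImA T Ts x))) hqI 2]
  have hst' : s + t ≤ 2 * Real.sqrt 2 * Real.sqrt E := by
    have h8 : s + t ≤ Real.sqrt (8 * E) := by
      rw [Real.le_sqrt (by positivity) (by nlinarith : (0:ℝ) ≤ 8 * E)]
      exact hst
    have h9 : Real.sqrt (8 * E) = 2 * Real.sqrt 2 * Real.sqrt E := by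
      rw [show (8:ℝ) * E = (2 * Real.sqrt 2) ^ 2 * E by
            rw [mul_pow, Real.sq_sqrt (by norm_num : (0:ℝ) ≤ 2)]; norm_num,
          Real.sqrt_mul (by positivity) E, Real.sqrt_sq (by positivity)]
    linarith
  have hM0 : 0 ≤ M := le_trans (opnorm_nonneg A X) (le_max_left _ _)
  calc ‖(⟪Q (T (X x)), Q x⟫ : ℂ)‖ + ‖(⟪Q (Y (T x)), Q x⟫ : ℂ)‖ ≤ M * s + M * t :=
        add_le_add h1 h2
  _ = M * (s + t) := by ring
  _ ≤ M * (2 * Real.sqrt 2 * Real.sqrt E) := mul_le_mul_of_nonneg_left hst' hM0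
  _ = 2 * Real.sqrt 2 * M * Real.sqrt E := by ring

theorem stmt14 (A T Ts X Xs Y Ys : H →L[ℂ] H) (hA : A.IsPositive)
    (hT : IsAAdjoint A T Ts) (hX : IsAAdjoint A X Xs) (hY : IsAAdjoint A Y Ys) :
    wA A (T.comp X + Y.comp T) ≤
        2 * Real.sqrt 2 * max (opnormA A X) (opnormA A Y) *
          Real.sqrt (wA A T ^ 2 - |opnormA A (ReA T Ts) ^ 2 - opnormA A (ImA T Ts) ^ 2| / 2) ∧
      wA A (T.comp X - Y.comp T) ≤
        2 * Real.sqrt 2 * max (opnormA A X) (opnormA A Y) *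
          Real.sqrt (wA A T ^ 2 - |opnormA A (ReA T Ts) ^ 2 - opnormA A (ImA T Ts) ^ 2| / 2) := by
  obtain ⟨Q, hQ⟩ := exists_Q A hA
  have hM0 : 0 ≤ max (opnormA A X) (opnormA A Y) :=
    le_trans (opnorm_nonneg A X) (le_max_left _ _)
  have hRHS : 0 ≤ 2 * Real.sqrt 2 * max (opnormA A X) (opnormA A Y) *
      Real.sqrt (wA A T ^ 2 - |opnormA A (ReA T Ts) ^ 2 - opnormA A (ImA T Ts) ^ 2| / 2) :=
    mul_nonneg (mul_nonneg (by positivity) hM0) (Real.sqrt_nonneg _)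
  constructor
  · apply Real.sSup_le _ hRHS
    rintro r ⟨x, hx, rfl⟩
    rw [vnorm_eq hQ] at hx
    have e : (T.comp X + Y.comp T) x = T (X x) + Y (T x) := by
      simp [add_apply, comp_apply]
    have esum : innA A (T (X x) + Y (T x)) x = innA A (T (X x)) x + innA A (Y (T x)) x := by
      unfold innA
      rw [map_add, inner_add_left]
    rw [e, esum]
    calc ‖innA A (T (X x)) x + innA A (Y (T x)) x‖
        ≤ ‖innA A (T (X x)) x‖ + ‖innA A (Y (T x)) x‖ := norm_add_le _ _
    _ = ‖(⟪Q (T (X x)), Q x⟫ : ℂ)‖ + ‖(⟪Q (Y (T x)), Q x⟫ : ℂ)‖ := by rw [hQ, hQ]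
    _ ≤ _ := elem_bound hA hQ hT hX hY hx
  · apply Real.sSup_le _ hRHS
    rintro r ⟨x, hx, rfl⟩
    rw [vnorm_eq hQ] at hx
    have e : (T.comp X - Y.comp T) x = T (X x) - Y (T x) := by
      simp [sub_apply, comp_apply]
    have esum : innA A (T (X x) - Y (T x)) x = innA A (T (X x)) x - innA A (Y (T x)) x := by
      unfold innA
      rw [map_sub, inner_sub_left]
    rw [e, esum]
    calc ‖innA A (T (X x)) x - innA A (Y (T x)) x‖
        ≤ ‖innA A (T (X x)) x‖ + ‖innA A (Y (T x)) x‖ := norm_sub_le _ _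
    _ = ‖(⟪Q (T (X x)), Q x⟫ : ℂ)‖ + ‖(⟪Q (Y (T x)), Q x⟫ : ℂ)‖ := by rw [hQ, hQ]
    _ ≤ _ := elem_bound hA hQ hT hX hY hx
end
end
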